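/- arXiv:2110.12762 — 3 statements merged into one kernel-verified Lean document; each statement's English description precedes it below -/
import Mathlib

section
/- Let P > 0 and let f : (−1,1) → ℝ be piecewise Lipschitz. Suppose p ∈ (1,∞), t ∈ L^p(−1,1) (extended by zero to ℝ) and u : (−1,1) → ℝ is absolutely continuous with derivative u′ ∈ L^p(−1,1), and assume: (i) 𝓗t(x) + f(x)·t(x) = u′(x) for a.e. x ∈ (−1,1); (ii) u(x) ≤ 0, t(x) ≤ 0 and u(x)·t(x) = 0 for a.e. x ∈ (−1,1); (iii) ∫_{−1}^{1} t(x) dx = −P. Then u(x) = 0 for every x ∈ (−1,1). -/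
open MeasureTheory Filter Set
open scoped Real Topology ENNReal

/-- Hilbert transform: `HT h x = -(1/π) · lim_{ε→0⁺} ∫_{|x-s|>ε} h(s)/(x-s) ds`
(the limit exists a.e. for `h ∈ Lᵖ(ℝ)` by M. Riesz's theorem). -/
noncomputable def HT (h : ℝ → ℝ) (x : ℝ) : ℝ :=
  limUnder (𝓝[>] (0:ℝ)) (fun ε : ℝ =>
    -(1 / Real.pi) * ∫ s in {s : ℝ | ε < |x - s|}, h s / (x - s))

/-- A piecewise Lipschitz function on `(-1,1)`: there is a partition
`-1 = y₀ < y₁ < ⋯ < y_m = 1` such that `f` is Lipschitz on each `(y_{j-1}, y_j)`. -/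
def PiecewiseLipschitzOn (f : ℝ → ℝ) : Prop :=
  ∃ (m : ℕ) (y : ℕ → ℝ), 0 < m ∧ y 0 = -1 ∧ y m = 1 ∧
    (∀ j, j < m → y j < y (j + 1)) ∧
    ∀ j, j < m → ∃ K : NNReal, LipschitzOnWith K f (Set.Ioo (y j) (y (j + 1)))

set_option maxHeartbeats 4000000 in
/-- For the moving flat punch with piecewise Lipschitz friction
coefficient, any solution of the contact problem has `u ≡ 0` on `(-1,1)`
(active contact everywhere). -/
theorem stmt0 (P : ℝ) (hP : 0 < P) (f : ℝ → ℝ)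
    (hf_pl : PiecewiseLipschitzOn f)
    (hf_zero : ∀ x, x ∉ Set.Ioo (-1:ℝ) 1 → f x = 0)
    (p : ℝ) (hp : 1 < p)
    (t u u' : ℝ → ℝ)
    (ht_zero : ∀ x, x ∉ Set.Ioo (-1:ℝ) 1 → t x = 0)
    (ht_Lp : MemLp t (ENNReal.ofReal p) (volume : Measure ℝ))
    (hu'_Lp : MemLp u' (ENNReal.ofReal p) (volume.restrict (Set.Ioo (-1:ℝ) 1)))
    (huAC : ∀ a ∈ Set.Ioo (-1:ℝ) 1, ∀ b ∈ Set.Ioo (-1:ℝ) 1,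
      u b - u a = ∫ s in a..b, u' s)
    (hCarleman : ∀ᵐ x ∂(volume : Measure ℝ), x ∈ Set.Ioo (-1:ℝ) 1 →
      HT t x + f x * t x = u' x)
    (hsign : ∀ᵐ x ∂(volume : Measure ℝ), x ∈ Set.Ioo (-1:ℝ) 1 →
      u x ≤ 0 ∧ t x ≤ 0 ∧ u x * t x = 0)
    (hmass : (∫ x in Set.Ioo (-1:ℝ) 1, t x) = -P) :
    ∀ x ∈ Set.Ioo (-1:ℝ) 1, u x = 0 := by
  intro x₀ hx₀
  by_contra hu0
  have hq1 : (1:ℝ≥0∞) ≤ ENNReal.ofReal p := by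
    rw [← ENNReal.ofReal_one]; exact ENNReal.ofReal_le_ofReal hp.le
  have hImeas : MeasurableSet (Set.Ioo (-1:ℝ) 1) := measurableSet_Ioo
  haveI hIfin : IsFiniteMeasure (volume.restrict (Set.Ioo (-1:ℝ) 1)) := by
    constructor
    rw [Measure.restrict_apply_univ, Real.volume_Ioo]
    exact ENNReal.ofReal_lt_top
  -- t is globally integrable
  have ht_intI : IntegrableOn t (Set.Ioo (-1:ℝ) 1) volume :=
    (ht_Lp.restrict _).integrable hq1
  have ht_int : Integrable t (volume : Measure ℝ) := by
    have : t = (Set.Ioo (-1:ℝ) 1).indicator t := by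
      funext s
      by_cases hs : s ∈ Set.Ioo (-1:ℝ) 1
      · simp [hs]
      · simp [hs, ht_zero s hs]
    rw [this]
    exact (integrable_indicator_iff hImeas).2 ht_intI
  have hu'_int : IntegrableOn u' (Set.Ioo (-1:ℝ) 1) volume := hu'_Lp.integrable hq1
  -- u is continuous on (-1,1)
  have hu_cont : ∀ x ∈ Set.Ioo (-1:ℝ) 1, ContinuousAt u x := by
    intro x hx
    obtain ⟨hx1, hx2⟩ := hx
    set c := (x + (-1))/2 with hc
    set d := (x + 1)/2 with hd
    have hc1 : (-1:ℝ) < c := by rw [hc]; linarith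
    have hcx : c < x := by rw [hc]; linarith
    have hxd : x < d := by rw [hd]; linarith
    have hd1 : d < 1 := by rw [hd]; linarith
    have hsub : Set.uIcc c d ⊆ Set.Ioo (-1:ℝ) 1 := by
      rw [Set.uIcc_of_le (by linarith)]
      intro y hy
      exact ⟨lt_of_lt_of_le hc1 hy.1, lt_of_le_of_lt hy.2 hd1⟩
    have hint : IntegrableOn u' (Set.uIcc c d) volume := hu'_int.mono_set hsub
    have hFcont : ContinuousOn (fun y => ∫ s in c..y, u' s) (Set.uIcc c d) :=
      intervalIntegral.continuousOn_primitive_interval hint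
    have hx_mem : x ∈ Set.Ioo c d := ⟨hcx, hxd⟩
    have hFat : ContinuousAt (fun y => u c + ∫ s in c..y, u' s) x := by
      have h1 : Set.uIcc c d ∈ 𝓝 x := by
        rw [Set.uIcc_of_le (by linarith)]
        exact Icc_mem_nhds hcx hxd
      exact continuousAt_const.add (hFcont.continuousAt h1)
    apply hFat.congr
    filter_upwards [(isOpen_Ioo).mem_nhds hx_mem] with y hy
    have hyI : y ∈ Set.Ioo (-1:ℝ) 1 := ⟨lt_trans hc1 hy.1, lt_trans hy.2 hd1⟩
    have hcI : c ∈ Set.Ioo (-1:ℝ) 1 := ⟨hc1, by linarith⟩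
    have h2 := huAC c hcI y hyI
    linarith
  -- u ≤ 0 everywhere on (-1,1)
  have hu_ae : ∀ᵐ y ∂(volume : Measure ℝ), y ∈ Set.Ioo (-1:ℝ) 1 → u y ≤ 0 := by
    filter_upwards [hsign] with y hy hyI
    exact (hy hyI).1
  have ht_ae : ∀ᵐ y ∂(volume : Measure ℝ), y ∈ Set.Ioo (-1:ℝ) 1 → t y ≤ 0 := by
    filter_upwards [hsign] with y hy hyI
    exact (hy hyI).2.1
  have hu_le : ∀ x ∈ Set.Ioo (-1:ℝ) 1, u x ≤ 0 := by
    intro x hx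
    by_contra hpos
    push_neg at hpos
    have hV : u ⁻¹' Set.Ioi 0 ∩ Set.Ioo (-1:ℝ) 1 ∈ 𝓝 x := by
      apply Filter.inter_mem
      · exact (hu_cont x hx) (Ioi_mem_nhds hpos)
      · exact (isOpen_Ioo).mem_nhds hx
    have hVpos : (0:ℝ≥0∞) < volume (u ⁻¹' Set.Ioi 0 ∩ Set.Ioo (-1:ℝ) 1) :=
      (volume : Measure ℝ).measure_pos_of_mem_nhds hV
    have hnull : volume (u ⁻¹' Set.Ioi 0 ∩ Set.Ioo (-1:ℝ) 1) = 0 := by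
      rw [MeasureTheory.ae_iff] at hu_ae
      refine measure_mono_null ?_ hu_ae
      intro y hy
      simp only [Set.mem_setOf_eq]
      intro h
      exact absurd (h hy.2) (not_le.mpr hy.1)
    rw [hnull] at hVpos
    exact lt_irrefl _ hVpos
  have hux₀ : u x₀ < 0 := lt_of_le_of_ne (hu_le x₀ hx₀) hu0
  obtain ⟨hx₀1, hx₀2⟩ := hx₀
  -- the gap endpoints
  classical
  set Zb : Set ℝ := {y | y ∈ Set.Ico x₀ 1 ∧ u y = 0} ∪ {1} with hZb
  set b := sInf Zb with hbdef
  set Za : Set ℝ := {y | y ∈ Set.Ioc (-1) x₀ ∧ u y = 0} ∪ {-1} with hZa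
  set a := sSup Za with hadef
  have hZb_ne : Zb.Nonempty := ⟨1, Or.inr rfl⟩
  have hZb_lb : ∀ y ∈ Zb, x₀ ≤ y := by
    rintro y (⟨⟨h1, _⟩, _⟩ | rfl)
    · exact h1
    · exact hx₀2.le
  have hZb_bdd : BddBelow Zb := ⟨x₀, hZb_lb⟩
  have hx₀b : x₀ ≤ b := le_csInf hZb_ne hZb_lb
  have hb1 : b ≤ 1 := csInf_le hZb_bdd (Or.inr rfl)
  have hub : b < 1 → u b = 0 := by
    intro hblt
    have hbI : b ∈ Set.Ioo (-1:ℝ) 1 := ⟨lt_of_lt_of_le hx₀1 hx₀b, hblt⟩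
    obtain ⟨z, hz_anti, hz_tend, hz_mem⟩ := exists_seq_tendsto_sInf hZb_ne hZb_bdd
    have hev : ∀ᶠ n in atTop, u (z n) = 0 := by
      have h1 : ∀ᶠ n in atTop, z n < 1 := hz_tend (Iio_mem_nhds hblt)
      filter_upwards [h1] with n hn
      rcases hz_mem n with h | h
      · exact h.2
      · simp only [Set.mem_singleton_iff] at h; rw [h] at hn; exact absurd hn (lt_irrefl 1)
    have htu : Filter.Tendsto (fun n => u (z n)) atTop (𝓝 (u b)) :=
      ((hu_cont b hbI).tendsto).comp hz_tend
    have htu0 : Filter.Tendsto (fun n => u (z n)) atTop (𝓝 (0:ℝ)) :=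
      Filter.Tendsto.congr' (by filter_upwards [hev] with n hn; exact hn.symm) tendsto_const_nhds
    exact tendsto_nhds_unique htu htu0
  have hx₀b' : x₀ < b := by
    rcases lt_or_eq_of_le hx₀b with h | h
    · exact h
    · exfalso
      have hblt : b < 1 := by rw [← h]; exact hx₀2
      have h2 := hub hblt
      rw [← h] at h2
      exact hu0 h2
  have hbne : ∀ y, x₀ ≤ y → y < b → u y ≠ 0 := by
    intro y h1 h2 hy0
    have : y ∈ Zb := Or.inl ⟨⟨h1, lt_of_lt_of_le h2 hb1⟩, hy0⟩
    exact absurd (csInf_le hZb_bdd this) (not_le.mpr h2)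
  -- symmetric side
  have hZa_ne : Za.Nonempty := ⟨-1, Or.inr rfl⟩
  have hZa_ub : ∀ y ∈ Za, y ≤ x₀ := by
    rintro y (⟨⟨_, h2⟩, _⟩ | rfl)
    · exact h2
    · exact hx₀1.le
  have hZa_bdd : BddAbove Za := ⟨x₀, hZa_ub⟩
  have hax₀ : a ≤ x₀ := csSup_le hZa_ne hZa_ub
  have ha1 : -1 ≤ a := le_csSup hZa_bdd (Or.inr rfl)
  have hua : -1 < a → u a = 0 := by
    intro halt
    have haI : a ∈ Set.Ioo (-1:ℝ) 1 := ⟨halt, lt_of_le_of_lt hax₀ hx₀2⟩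
    obtain ⟨z, hz_mono, hz_tend, hz_mem⟩ := exists_seq_tendsto_sSup hZa_ne hZa_bdd
    have hev : ∀ᶠ n in atTop, u (z n) = 0 := by
      have h1 : ∀ᶠ n in atTop, -1 < z n := hz_tend (Ioi_mem_nhds halt)
      filter_upwards [h1] with n hn
      rcases hz_mem n with h | h
      · exact h.2
      · simp only [Set.mem_singleton_iff] at h; rw [h] at hn; exact absurd hn (lt_irrefl (-1))
    have htu : Filter.Tendsto (fun n => u (z n)) atTop (𝓝 (u a)) :=
      ((hu_cont a haI).tendsto).comp hz_tend
    have htu0 : Filter.Tendsto (fun n => u (z n)) atTop (𝓝 (0:ℝ)) :=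
      Filter.Tendsto.congr' (by filter_upwards [hev] with n hn; exact hn.symm) tendsto_const_nhds
    exact tendsto_nhds_unique htu htu0
  have hax₀' : a < x₀ := by
    rcases lt_or_eq_of_le hax₀ with h | h
    · exact h
    · exfalso; rw [h] at hua; exact hu0 (hua hx₀1)
  have hane : ∀ y, a < y → y ≤ x₀ → u y ≠ 0 := by
    intro y h1 h2 hy0
    have : y ∈ Za := Or.inl ⟨⟨lt_of_le_of_lt ha1 h1, h2⟩, hy0⟩
    exact absurd (le_csSup hZa_bdd this) (not_le.mpr h1)
  have hab : a < b := lt_trans hax₀' hx₀b'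
  have hIoo_sub : Set.Ioo a b ⊆ Set.Ioo (-1:ℝ) 1 := Set.Ioo_subset_Ioo ha1 hb1
  have huneg : ∀ y ∈ Set.Ioo a b, u y < 0 := by
    intro y hy
    refine lt_of_le_of_ne (hu_le y (hIoo_sub hy)) ?_
    rcases le_total y x₀ with h | h
    · exact hane y hy.1 h
    · exact hbne y h hy.2
  -- t vanishes a.e. on the gap
  have ht0 : ∀ᵐ s ∂(volume : Measure ℝ), s ∈ Set.Ioo a b → t s = 0 := by
    filter_upwards [hsign] with s hs hsab
    obtain ⟨_, _, hmul⟩ := hs (hIoo_sub hsab)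
    exact (mul_eq_zero.mp hmul).resolve_left (ne_of_lt (huneg s hsab))
  set E : Set ℝ := Set.Ioo (-1:ℝ) 1 \ Set.Ioo a b with hE
  have hE_meas : MeasurableSet E := hImeas.diff measurableSet_Ioo
  have hE_sub : E ⊆ Set.Ioo (-1:ℝ) 1 := Set.diff_subset
  have hE_loc : ∀ s ∈ E, s ≤ a ∨ b ≤ s := by
    intro s hs
    rcases hs with ⟨hsI, hsn⟩
    by_contra h
    push_neg at h
    exact hsn ⟨h.1, h.2⟩
  have ht_ae_zero_compl : ∀ᵐ s ∂(volume : Measure ℝ), s ∉ E → t s = 0 := by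
    filter_upwards [ht0] with s h hsE
    by_cases hsI : s ∈ Set.Ioo (-1:ℝ) 1
    · exact h (by_contra fun hc => hsE ⟨hsI, hc⟩)
    · exact ht_zero s hsI
  -- kernel integrability
  have hdist : ∀ x ∈ Set.Ioo a b, ∀ s ∈ E, min (x - a) (b - x) ≤ |x - s| := by
    intro x hx s hs
    rcases hE_loc s hs with h | h
    · calc min (x - a) (b - x) ≤ x - a := min_le_left _ _
        _ ≤ x - s := by linarith
        _ ≤ |x - s| := le_abs_self _
    · calc min (x - a) (b - x) ≤ b - x := min_le_right _ _
        _ ≤ s - x := by linarith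
        _ = -(x - s) := by ring
        _ ≤ |x - s| := neg_le_abs _
  have hker_meas : ∀ x : ℝ, AEStronglyMeasurable (fun s => t s / (x - s)) (volume.restrict E) := by
    intro x
    have h2 : Measurable fun s : ℝ => (x - s)⁻¹ := (measurable_const.sub measurable_id).inv
    simp only [div_eq_mul_inv]
    exact ht_Lp.aestronglyMeasurable.restrict.mul h2.aestronglyMeasurable.restrict
  have hker_int : ∀ x ∈ Set.Ioo a b, IntegrableOn (fun s => t s / (x - s)) E volume := by
    intro x hx
    set D := min (x - a) (b - x) with hD
    have hDpos : 0 < D := lt_min (by linarith [hx.1]) (by linarith [hx.2])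
    refine Integrable.mono' ((ht_int.norm.mul_const D⁻¹).integrableOn) (hker_meas x) ?_
    rw [MeasureTheory.ae_restrict_iff' hE_meas]
    refine Filter.Eventually.of_forall fun s hs => ?_
    have h1 : D ≤ |x - s| := hdist x hx s hs
    have h2 : (0:ℝ) < |x - s| := lt_of_lt_of_le hDpos h1
    rw [norm_div]
    calc ‖t s‖ / ‖x - s‖ = ‖t s‖ / |x - s| := by simp only [Real.norm_eq_abs]
      _ ≤ ‖t s‖ / D := div_le_div_of_nonneg_left (norm_nonneg _) hDpos h1
      _ = ‖t s‖ * D⁻¹ := div_eq_mul_inv _ _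
  -- HT evaluates to the honest integral on the gap
  set g : ℝ → ℝ := fun x => -(1/Real.pi) * ∫ s in E, t s / (x - s) with hg
  have hHT : ∀ x ∈ Set.Ioo a b, HT t x = g x := by
    intro x hx
    set D := min (x - a) (b - x) with hD
    have hDpos : 0 < D := lt_min (by linarith [hx.1]) (by linarith [hx.2])
    have hkey : ∀ ε ∈ Set.Ioo (0:ℝ) D,
        (∫ s in {s : ℝ | ε < |x - s|}, t s / (x - s)) = ∫ s in E, t s / (x - s) := by
      intro ε hε
      have hA_meas : MeasurableSet {s : ℝ | ε < |x - s|} :=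
        (isOpen_lt continuous_const ((continuous_const.sub continuous_id).abs)).measurableSet
      have hEA : E ⊆ {s : ℝ | ε < |x - s|} := fun s hs =>
        lt_of_lt_of_le hε.2 (hdist x hx s hs)
      have step1 : (∫ s in {s : ℝ | ε < |x - s|}, t s / (x - s))
          = ∫ s in {s : ℝ | ε < |x - s|}, E.indicator (fun s => t s / (x - s)) s := by
        apply setIntegral_congr_ae hA_meas
        filter_upwards [ht_ae_zero_compl] with s h0 _
        by_cases hsE : s ∈ E
        · rw [Set.indicator_of_mem hsE]
        · rw [Set.indicator_of_notMem hsE, h0 hsE, zero_div]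
      rw [step1, setIntegral_indicator hE_meas,
        Set.inter_eq_self_of_subset_right hEA]
    unfold HT
    apply Filter.Tendsto.limUnder_eq
    apply Filter.Tendsto.congr' _ tendsto_const_nhds
    filter_upwards [Ioo_mem_nhdsGT_of_mem (Set.left_mem_Ico.mpr hDpos)] with ε hε
    simp only [hg]
    rw [hkey ε hε]
  have hu'g : ∀ᵐ s ∂(volume : Measure ℝ), s ∈ Set.Ioo a b → u' s = g s := by
    filter_upwards [hCarleman, ht0] with s hC h0 hs
    have h1 := hC (hIoo_sub hs)
    rw [hHT s hs, h0 hs, mul_zero, add_zero] at h1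
    exact h1.symm
  -- mass on E
  have hmassE : (∫ s in E, t s) = -P := by
    have hsplit := integral_inter_add_diff (s := Set.Ioo (-1:ℝ) 1) (t := Set.Ioo a b)
      (f := t) (μ := volume) measurableSet_Ioo ht_intI
    rw [Set.inter_eq_self_of_subset_right hIoo_sub] at hsplit
    have h0 : (∫ s in Set.Ioo a b, t s) = ∫ s in Set.Ioo a b, (0:ℝ) := by
      apply setIntegral_congr_ae measurableSet_Ioo
      filter_upwards [ht0] with s h hs
      exact h hs
    rw [h0, integral_zero, zero_add, hmass] at hsplit
    rw [hE]
    exact hsplit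
  -- monotonicity of g
  have hπ : -(1/Real.pi) ≤ 0 := neg_nonpos.mpr (by positivity)
  have hg_anti : ∀ x₁ ∈ Set.Ioo a b, ∀ x₂ ∈ Set.Ioo a b, x₁ ≤ x₂ → g x₂ ≤ g x₁ := by
    intro x₁ h₁ x₂ h₂ h12
    have hint : (∫ s in E, t s / (x₁ - s)) ≤ ∫ s in E, t s / (x₂ - s) := by
      apply integral_mono_ae (hker_int x₁ h₁) (hker_int x₂ h₂)
      rw [Filter.EventuallyLE, MeasureTheory.ae_restrict_iff' hE_meas]
      filter_upwards [ht_ae] with s hts hs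
      have hts0 : t s ≤ 0 := hts (hE_sub hs)
      have hinv : (x₂ - s)⁻¹ ≤ (x₁ - s)⁻¹ := by
        rcases hE_loc s hs with hsa | hsb
        · have hp1 : 0 < x₁ - s := by linarith [h₁.1]
          exact inv_anti₀ hp1 (by linarith)
        · have hn2 : x₂ - s < 0 := by linarith [h₂.2]
          have hn1 : x₁ - s < 0 := by linarith
          exact (inv_le_inv_of_neg hn2 hn1).mpr (by linarith)
      calc t s / (x₁ - s) = t s * (x₁ - s)⁻¹ := div_eq_mul_inv _ _
        _ ≤ t s * (x₂ - s)⁻¹ := mul_le_mul_of_nonpos_left hinv hts0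
        _ = t s / (x₂ - s) := (div_eq_mul_inv _ _).symm
    simp only [hg]
    exact mul_le_mul_of_nonpos_left hint hπ
  have hx₀ab : x₀ ∈ Set.Ioo a b := ⟨hax₀', hx₀b'⟩
  have hx₀I : x₀ ∈ Set.Ioo (-1:ℝ) 1 := ⟨hx₀1, hx₀2⟩
  have hACoo : ∀ c ∈ Set.Ioo (-1:ℝ) 1, ∀ d ∈ Set.Ioo (-1:ℝ) 1, c ≤ d →
      u d - u c = ∫ s in Set.Ioo c d, u' s := by
    intro c hc d hd hcd
    rw [huAC c hc d hd, intervalIntegral.integral_of_le hcd,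
      MeasureTheory.integral_Ioc_eq_integral_Ioo]
  have hbound_le : ∀ c d M : ℝ, c < d → Set.Ioo c d ⊆ Set.Ioo a b →
      (∀ x ∈ Set.Ioo c d, g x ≤ M) → (∫ s in Set.Ioo c d, u' s) ≤ M * (d - c) := by
    intro c d M hcd hsub hM
    have hIsub : Set.Ioo c d ⊆ Set.Ioo (-1:ℝ) 1 := fun y hy => hIoo_sub (hsub hy)
    have hfin : volume (Set.Ioo c d) < ⊤ := by rw [Real.volume_Ioo]; exact ENNReal.ofReal_lt_top
    have h1 : (∫ s in Set.Ioo c d, u' s) ≤ ∫ _ in Set.Ioo c d, M := by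
      apply integral_mono_ae (hu'_int.mono_set hIsub) (integrableOn_const hfin.ne)
      rw [Filter.EventuallyLE, MeasureTheory.ae_restrict_iff' measurableSet_Ioo]
      filter_upwards [hu'g] with s hs hsin
      rw [hs (hsub hsin)]
      exact hM s hsin
    rw [setIntegral_const, Real.volume_real_Ioo_of_le hcd.le, smul_eq_mul] at h1
    linarith
  have hbound_ge : ∀ c d M : ℝ, c < d → Set.Ioo c d ⊆ Set.Ioo a b →
      (∀ x ∈ Set.Ioo c d, M ≤ g x) → M * (d - c) ≤ ∫ s in Set.Ioo c d, u' s := by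
    intro c d M hcd hsub hM
    have hIsub : Set.Ioo c d ⊆ Set.Ioo (-1:ℝ) 1 := fun y hy => hIoo_sub (hsub hy)
    have hfin : volume (Set.Ioo c d) < ⊤ := by rw [Real.volume_Ioo]; exact ENNReal.ofReal_lt_top
    have h1 : (∫ _ in Set.Ioo c d, M) ≤ ∫ s in Set.Ioo c d, u' s := by
      apply integral_mono_ae (integrableOn_const (C := M) hfin.ne) (hu'_int.mono_set hIsub)
      rw [Filter.EventuallyLE, MeasureTheory.ae_restrict_iff' measurableSet_Ioo]
      filter_upwards [hu'g] with s hs hsin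
      rw [hs (hsub hsin)]
      exact hM s hsin
    rw [setIntegral_const, Real.volume_real_Ioo_of_le hcd.le, smul_eq_mul] at h1
    linarith
  rcases eq_or_lt_of_le ha1 with ha' | ha' <;> rcases lt_or_eq_of_le hb1 with hb' | hb'
  -- Case A : a = -1, b < 1
  · have hub0 : u b = 0 := hub hb'
    have hbI : b ∈ Set.Ioo (-1:ℝ) 1 := ⟨lt_trans hx₀1 hx₀b', hb'⟩
    have hlow : (∫ s in E, -t s / 2) ≤ ∫ s in E, t s / (x₀ - s) := by
      apply integral_mono_ae ((ht_int.neg.div_const 2).integrableOn) (hker_int x₀ hx₀ab)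
      rw [Filter.EventuallyLE, MeasureTheory.ae_restrict_iff' hE_meas]
      filter_upwards [ht_ae] with s hts hs
      have hts0 : t s ≤ 0 := hts (hE_sub hs)
      have hsb : b ≤ s := by
        rcases hE_loc s hs with h | h
        · exfalso; have := (hE_sub hs).1; rw [← ha'] at h; linarith
        · exact h
      have hv1 : x₀ - s < 0 := by linarith
      have hv2 : -2 < x₀ - s := by have := (hE_sub hs).2; linarith
      have hinv : (x₀ - s)⁻¹ ≤ -(1/2) := by
        rw [show -(1/2 : ℝ) = (-2 : ℝ)⁻¹ by norm_num]
        exact (inv_le_inv_of_neg hv1 (by norm_num)).mpr hv2.le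
      calc -t s / 2 = t s * (-(1/2)) := by ring
        _ ≤ t s * (x₀ - s)⁻¹ := mul_le_mul_of_nonpos_left hinv hts0
        _ = t s / (x₀ - s) := (div_eq_mul_inv _ _).symm
    have hPE : (∫ s in E, -t s / 2) = P/2 := by
      rw [integral_div, integral_neg, hmassE]; ring
    have hgb : g x₀ ≤ -(1/Real.pi) * (P/2) := by
      simp only [hg]
      exact mul_le_mul_of_nonpos_left (hPE ▸ hlow) hπ
    have hMneg : -(1/Real.pi) * (P/2) < 0 :=
      mul_neg_of_neg_of_pos (neg_lt_zero.mpr (by positivity)) (by positivity)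
    have hIb := hbound_le x₀ b (-(1/Real.pi) * (P/2)) hx₀b'
      (fun y hy => ⟨lt_trans hax₀' hy.1, hy.2⟩)
      (fun x hx => le_trans (hg_anti x₀ hx₀ab x ⟨lt_trans hax₀' hx.1, hx.2⟩ hx.1.le) hgb)
    have hACb := hACoo x₀ hx₀I b hbI hx₀b'.le
    nlinarith [mul_neg_of_neg_of_pos hMneg (sub_pos.mpr hx₀b')]
  -- Case D : a = -1, b = 1
  · have : (∫ s in E, t s) = 0 := by
      rw [hE, ← ha', ← hb', Set.diff_self, setIntegral_empty]
    linarith [hmassE]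
  -- Case C : -1 < a, b < 1
  · have hua0 : u a = 0 := hua ha'
    have hub0 : u b = 0 := hub hb'
    have haI : a ∈ Set.Ioo (-1:ℝ) 1 := ⟨ha', lt_of_le_of_lt hax₀ hx₀2⟩
    have hbI : b ∈ Set.Ioo (-1:ℝ) 1 := ⟨lt_trans hx₀1 hx₀b', hb'⟩
    have h1 := hbound_ge a x₀ (g x₀) hax₀'
      (fun y hy => ⟨hy.1, lt_trans hy.2 hx₀b'⟩)
      (fun x hx => hg_anti x ⟨hx.1, lt_trans hx.2 hx₀b'⟩ x₀ hx₀ab hx.2.le)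
    have h2 := hbound_le x₀ b (g x₀) hx₀b'
      (fun y hy => ⟨lt_trans hax₀' hy.1, hy.2⟩)
      (fun x hx => hg_anti x₀ hx₀ab x ⟨lt_trans hax₀' hx.1, hx.2⟩ hx.1.le)
    have hACa := hACoo a haI x₀ hx₀I hax₀'.le
    have hACb := hACoo x₀ hx₀I b hbI hx₀b'.le
    have hg_neg : g x₀ < 0 := by
      by_contra hpos
      push_neg at hpos
      nlinarith [mul_nonneg hpos (sub_nonneg.mpr hax₀'.le)]
    nlinarith [mul_neg_of_neg_of_pos hg_neg (sub_pos.mpr hx₀b')]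
  -- Case B : -1 < a, b = 1
  · have hua0 : u a = 0 := hua ha'
    have haI : a ∈ Set.Ioo (-1:ℝ) 1 := ⟨ha', lt_of_le_of_lt hax₀ hx₀2⟩
    have hlow : (∫ s in E, t s / (x₀ - s)) ≤ ∫ s in E, t s / 2 := by
      apply integral_mono_ae (hker_int x₀ hx₀ab) ((ht_int.div_const 2).integrableOn)
      rw [Filter.EventuallyLE, MeasureTheory.ae_restrict_iff' hE_meas]
      filter_upwards [ht_ae] with s hts hs
      have hts0 : t s ≤ 0 := hts (hE_sub hs)
      have hsa : s ≤ a := by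
        rcases hE_loc s hs with h | h
        · exact h
        · exfalso; have := (hE_sub hs).2; rw [← hb'] at this; linarith
      have hv1 : 0 < x₀ - s := by linarith
      have hv2 : x₀ - s < 2 := by have := (hE_sub hs).1; linarith
      have hinv : (1/2 : ℝ) ≤ (x₀ - s)⁻¹ := by
        rw [show (1/2 : ℝ) = (2 : ℝ)⁻¹ by norm_num]
        exact inv_anti₀ hv1 hv2.le
      calc t s / (x₀ - s) = t s * (x₀ - s)⁻¹ := div_eq_mul_inv _ _
        _ ≤ t s * (1/2) := mul_le_mul_of_nonpos_left hinv hts0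
        _ = t s / 2 := by ring
    have hPE : (∫ s in E, t s / 2) = -P/2 := by
      rw [integral_div, hmassE]
    have hgb : -(1/Real.pi) * (-P/2) ≤ g x₀ := by
      simp only [hg]
      exact mul_le_mul_of_nonpos_left (hPE ▸ hlow) hπ
    have hMpos : 0 < -(1/Real.pi) * (-P/2) := by
      have hπpos := Real.pi_pos
      have h9 : -(1/Real.pi) * (-P/2) = (1/Real.pi) * (P/2) := by ring
      rw [h9]; positivity
    have hIa := hbound_ge a x₀ (-(1/Real.pi) * (-P/2)) hax₀'
      (fun y hy => ⟨hy.1, lt_trans hy.2 hx₀b'⟩)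
      (fun x hx => le_trans hgb (hg_anti x ⟨hx.1, lt_trans hx.2 hx₀b'⟩ x₀ hx₀ab hx.2.le))
    have hACa := hACoo a haI x₀ hx₀I hax₀'.le
    nlinarith [mul_pos hMpos (sub_pos.mpr hax₀')]
end

section
/- Let μ⁺ and μ⁻ be finite atomless Borel measures on ℝ, both supported in [−1,1], with μ⁺(ℝ) = μ⁻(ℝ). For a bounded Borel function h write ∫ h dt := ∫ h dμ⁺ − ∫ h dμ⁻, and set T(x) := μ⁺([−1,x]) − μ⁻([−1,x]) (so T is continuous, T(−1) = 0 and T(1) = 0). Let f₁, f₂ : ℝ → ℝ be nondecreasing right-continuous functions with associated Lebesgue–Stieltjes measures ν₁, ν₂, and set f := f₁ − f₂ (a function of bounded variation on [−1,1] with derivative measure ν₁ − ν₂). Then: ∫_{[−1,1]} ( ∫_{[−1,x]} f dt ) dt(x) = (1/2)·( ∫_{[−1,1]} T(x)² dν₁(x) − ∫_{[−1,1]} T(x)² dν₂(x) ), where ∫_{[−1,x]} f dt := ∫ f·χ_{[−1,x]} dμ⁺ − ∫ f·χ_{[−1,x]} dμ⁻ and the outer integral of the bounded continuous function x ↦ ∫_{[−1,x]}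 f dt is likewise taken against μ⁺ minus against μ⁻. -/
open MeasureTheory Filter Set
open scoped Real Topology ENNReal

-- helper: integrable of ae bounded on finite measure
lemma aux_int_bdd {α : Type*} [MeasurableSpace α] {μ : Measure α} [IsFiniteMeasure μ] {g : α → ℝ}
    (hg : AEStronglyMeasurable g μ) {C : ℝ} (h : ∀ᵐ x ∂μ, |g x| ≤ C) :
    Integrable g μ :=
  Integrable.mono' (integrable_const C) hg (by simpa [Real.norm_eq_abs] using h)

lemma aux_meas_cdf (μ : Measure ℝ) : Measurable fun y => (μ (Iic y)).toReal := by
  have h1 : Monotone fun y => μ (Iic y) := fun a b hab => measure_mono (Iic_subset_Iic.2 hab)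
  exact ENNReal.measurable_toReal.comp h1.measurable

lemma aux_key (μ ν : Measure ℝ) [IsFiniteMeasure μ] [IsFiniteMeasure ν]
    (hν : ∀ x, ν {x} = 0) :
    (∫ y, (ν (Iic y)).toReal ∂μ) + (∫ y, (μ (Iic y)).toReal ∂ν)
      = (μ univ).toReal * (ν univ).toReal := by
  have hs1 : MeasurableSet {p : ℝ × ℝ | p.2 ≤ p.1} := measurableSet_le measurable_snd measurable_fst
  have hs2 : MeasurableSet {p : ℝ × ℝ | p.1 ≤ p.2} := measurableSet_le measurable_fst measurable_snd
  have m1 : ∫ y, (ν (Iic y)).toReal ∂μ = ((μ.prod ν) {p | p.2 ≤ p.1}).toReal := by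
    rw [integral_toReal]
    · congr 1
      rw [Measure.prod_apply hs1]
      rfl
    · exact (Monotone.measurable (fun a b hab => measure_mono (Iic_subset_Iic.2 hab) :
        Monotone fun y => ν (Iic y))).aemeasurable
    · exact ae_of_all _ fun y => measure_lt_top ν _
  have m2 : ∫ y, (μ (Iic y)).toReal ∂ν = ((μ.prod ν) {p | p.1 ≤ p.2}).toReal := by
    have swp : (ν.prod μ) {p : ℝ × ℝ | p.2 ≤ p.1} = (μ.prod ν) {p | p.1 ≤ p.2} := by
      rw [← Measure.prod_swap, Measure.map_apply measurable_swap hs1]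
      rfl
    rw [← swp, integral_toReal]
    · congr 1
      rw [Measure.prod_apply hs1]
      rfl
    · exact (Monotone.measurable (fun a b hab => measure_mono (Iic_subset_Iic.2 hab) :
        Monotone fun y => μ (Iic y))).aemeasurable
    · exact ae_of_all _ fun y => measure_lt_top μ _
  have hdiag : (μ.prod ν) {p : ℝ × ℝ | p.1 = p.2} = 0 := by
    rw [Measure.prod_apply (measurableSet_eq_fun measurable_fst measurable_snd)]
    have : ∀ y : ℝ, (Prod.mk y ⁻¹' {p : ℝ × ℝ | p.1 = p.2}) = {y} := by
      intro y; ext z; simp [eq_comm]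
    simp only [this, hν]
    simp
  have hunion : {p : ℝ × ℝ | p.2 ≤ p.1} ∪ {p | p.1 ≤ p.2} = univ := by
    ext p; simp [le_total p.2 p.1]
  have hinter : {p : ℝ × ℝ | p.2 ≤ p.1} ∩ {p | p.1 ≤ p.2} = {p | p.1 = p.2} := by
    ext p; constructor
    · rintro ⟨h1, h2⟩; exact le_antisymm h2 h1
    · rintro h; exact ⟨le_of_eq h.symm, le_of_eq h⟩
  have hsum := measure_union_add_inter (μ := μ.prod ν) {p : ℝ × ℝ | p.2 ≤ p.1} hs2
  rw [hunion, hinter, hdiag, add_zero] at hsum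
  rw [m1, m2, ← ENNReal.toReal_add (measure_ne_top _ _) (measure_ne_top _ _), ← hsum,
    ← ENNReal.toReal_mul, ← Measure.prod_prod, univ_prod_univ]

lemma aux_fub1 (μ ν : Measure ℝ) [IsFiniteMeasure μ] [IsFiniteMeasure ν] {g : ℝ → ℝ}
    (hg : Measurable g) {C : ℝ} (hbd : ∀ᵐ y ∂ν, |g y| ≤ C) :
    ∫ x, (∫ y in Iic x, g y ∂ν) ∂μ = ∫ y, g y * (μ (Ici y)).toReal ∂ν := by
  set H : ℝ × ℝ → ℝ := fun p => if p.2 ≤ p.1 then g p.2 else 0 with hH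
  have hHm : Measurable H :=
    Measurable.ite (measurableSet_le measurable_snd measurable_fst)
      (hg.comp measurable_snd) measurable_const
  have hHint : Integrable H (μ.prod ν) := by
    apply aux_int_bdd hHm.aestronglyMeasurable (C := max C 0)
    have hbad : (μ.prod ν) {p : ℝ × ℝ | ¬ |H p| ≤ max C 0} = 0 := by
      refine measure_mono_null (t := univ ×ˢ {y : ℝ | ¬ |g y| ≤ C}) (fun p hp => ?_) ?_
      · simp only [mem_setOf_eq, mem_prod, mem_univ, true_and] at hp ⊢
        intro hgood
        apply hp
        by_cases h : p.2 ≤ p.1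
        · simp only [hH, if_pos h]; exact le_max_of_le_left hgood
        · simp only [hH, if_neg h, abs_zero]; exact le_max_right _ _
      · rw [Measure.prod_prod]
        have : ν {y : ℝ | ¬ |g y| ≤ C} = 0 := hbd
        rw [this, mul_zero]
    exact (ae_iff.2 hbad)
  have swap := integral_integral_swap (f := fun x y => H (x, y)) (μ := μ) (ν := ν) hHint
  have lhs_eq : ∀ x : ℝ, (∫ y, H (x, y) ∂ν) = ∫ y in Iic x, g y ∂ν := by
    intro x
    have h : (fun y => H (x, y)) = (Iic x).indicator g := by
      funext y; simp [hH, Set.indicator_apply, Iic]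
    rw [h, integral_indicator measurableSet_Iic]
  have rhs_eq : ∀ y : ℝ, (∫ x, H (x, y) ∂μ) = g y * (μ (Ici y)).toReal := by
    intro y
    have : (fun x => H (x, y)) = (Ici y).indicator (fun _ => g y) := by
      ext x; simp [hH, Set.indicator_apply, Ici]
    rw [this, integral_indicator measurableSet_Ici, setIntegral_const, smul_eq_mul, mul_comm, measureReal_def]
  calc ∫ x, (∫ y in Iic x, g y ∂ν) ∂μ = ∫ x, (∫ y, H (x, y) ∂ν) ∂μ := by
        simp_rw [lhs_eq]
    _ = ∫ y, (∫ x, H (x, y) ∂μ) ∂ν := swap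
    _ = ∫ y, g y * (μ (Ici y)).toReal ∂ν := by simp_rw [rhs_eq]

lemma aux_fub2 (μ ν : Measure ℝ) [IsFiniteMeasure μ] [IsFiniteMeasure ν] {g : ℝ → ℝ}
    (hg : Measurable g) {C : ℝ} (hbd : ∀ᵐ y ∂μ, |g y| ≤ C) :
    ∫ y, g y * (ν (Iic y)).toReal ∂μ = ∫ z, (∫ y in Ici z, g y ∂μ) ∂ν := by
  set H : ℝ × ℝ → ℝ := fun p => if p.2 ≤ p.1 then g p.1 else 0 with hH
  have hHm : Measurable H :=
    Measurable.ite (measurableSet_le measurable_snd measurable_fst)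
      (hg.comp measurable_fst) measurable_const
  have hHint : Integrable H (μ.prod ν) := by
    apply aux_int_bdd hHm.aestronglyMeasurable (C := max C 0)
    have hbad : (μ.prod ν) {p : ℝ × ℝ | ¬ |H p| ≤ max C 0} = 0 := by
      refine measure_mono_null (t := {y : ℝ | ¬ |g y| ≤ C} ×ˢ univ) (fun p hp => ?_) ?_
      · simp only [mem_setOf_eq, mem_prod, mem_univ, and_true] at hp ⊢
        intro hgood
        apply hp
        by_cases h : p.2 ≤ p.1
        · simp only [hH, if_pos h]; exact le_max_of_le_left hgood
        · simp only [hH, if_neg h, abs_zero]; exact le_max_right _ _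
      · rw [Measure.prod_prod]
        have : μ {y : ℝ | ¬ |g y| ≤ C} = 0 := hbd
        rw [this, zero_mul]
    exact (ae_iff.2 hbad)
  have swap := integral_integral_swap (f := fun y z => H (y, z)) (μ := μ) (ν := ν) hHint
  have lhs_eq : ∀ y : ℝ, (∫ z, H (y, z) ∂ν) = g y * (ν (Iic y)).toReal := by
    intro y
    have : (fun z => H (y, z)) = (Iic y).indicator (fun _ => g y) := by
      ext z; simp [hH, Set.indicator_apply, Iic]
    rw [this, integral_indicator measurableSet_Iic, setIntegral_const, smul_eq_mul, mul_comm, measureReal_def]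
  have rhs_eq : ∀ z : ℝ, (∫ y, H (y, z) ∂μ) = ∫ y in Ici z, g y ∂μ := by
    intro z
    have h : (fun y => H (y, z)) = (Ici z).indicator g := by
      funext y; simp [hH, Set.indicator_apply, Ici]
    rw [h, integral_indicator measurableSet_Ici]
  calc ∫ y, g y * (ν (Iic y)).toReal ∂μ = ∫ y, (∫ z, H (y, z) ∂ν) ∂μ := by
        simp_rw [lhs_eq]
    _ = ∫ z, (∫ y, H (y, z) ∂μ) ∂ν := swap
    _ = ∫ z, (∫ y in Ici z, g y ∂μ) ∂ν := by simp_rw [rhs_eq]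

lemma aux_int_cdf (ν lam : Measure ℝ) [IsFiniteMeasure ν] [IsFiniteMeasure lam] :
    Integrable (fun y => (ν (Iic y)).toReal) lam :=
  aux_int_bdd (aux_meas_cdf ν).aestronglyMeasurable (C := (ν univ).toReal)
    (ae_of_all _ fun y => by
      rw [abs_of_nonneg ENNReal.toReal_nonneg]
      exact ENNReal.toReal_mono (measure_ne_top _ _) (measure_mono (subset_univ _)))

lemma aux_quad (μp μm : Measure ℝ) [IsFiniteMeasure μp] [IsFiniteMeasure μm]
    (hp : ∀ x, μp {x} = 0) (hm : ∀ x, μm {x} = 0) :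
    (∫ y, ((μp (Iic y)).toReal - (μm (Iic y)).toReal) ∂μp)
      - ∫ y, ((μp (Iic y)).toReal - (μm (Iic y)).toReal) ∂μm
      = ((μp univ).toReal - (μm univ).toReal) ^ 2 / 2 := by
  rw [integral_sub (aux_int_cdf μp μp) (aux_int_cdf μm μp),
    integral_sub (aux_int_cdf μp μm) (aux_int_cdf μm μm)]
  have k1 := aux_key μp μp hp
  have k2 := aux_key μm μm hm
  have k3 := aux_key μp μm hm
  nlinarith [k1, k2, k3]

/-- The key integration-by-parts identity: for a signed measure
`t = μ⁺ - μ⁻` (finite, atomless, supported in `[-1,1]`, with zero total mass) and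
a `BV` function `f = f₁ - f₂` (difference of nondecreasing right-continuous
functions, with derivative measure `ν₁ - ν₂`),
`∫ (∫_{[-1,x]} f dt) dt(x) = (1/2)(∫ T² dν₁ - ∫ T² dν₂)` where
`T(x) = μ⁺([-1,x]) - μ⁻([-1,x])`. -/
theorem stmt10 (μp μm : Measure ℝ) [IsFiniteMeasure μp] [IsFiniteMeasure μm]
    (hp_atomless : ∀ x : ℝ, μp {x} = 0) (hm_atomless : ∀ x : ℝ, μm {x} = 0)
    (hp_supp : μp (Set.Icc (-1:ℝ) 1)ᶜ = 0) (hm_supp : μm (Set.Icc (-1:ℝ) 1)ᶜ = 0)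
    (hmass : μp Set.univ = μm Set.univ)
    (T : ℝ → ℝ)
    (hT : ∀ x, T x = (μp (Set.Icc (-1:ℝ) x)).toReal - (μm (Set.Icc (-1:ℝ) x)).toReal)
    (f₁ f₂ : StieltjesFunction ℝ) (f : ℝ → ℝ)
    (hf : ∀ x, f x = f₁ x - f₂ x)
    (F : ℝ → ℝ)
    (hF : ∀ x, F x = (∫ y in Set.Icc (-1:ℝ) x, f y ∂μp)
      - ∫ y in Set.Icc (-1:ℝ) x, f y ∂μm) :
    (∫ x in Set.Icc (-1:ℝ) 1, F x ∂μp) - (∫ x in Set.Icc (-1:ℝ) 1, F x ∂μm)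
      = (1/2) * ((∫ x in Set.Icc (-1:ℝ) 1, (T x) ^ 2 ∂f₁.measure)
        - ∫ x in Set.Icc (-1:ℝ) 1, (T x) ^ 2 ∂f₂.measure) := by
  -- ### preliminaries
  have haep : ∀ᵐ y ∂μp, y ∈ Icc (-1:ℝ) 1 := mem_ae_iff.mpr hp_supp
  have haem : ∀ᵐ y ∂μm, y ∈ Icc (-1:ℝ) 1 := mem_ae_iff.mpr hm_supp
  -- Iio below -1 is null
  have hIio_null : ∀ (μ : Measure ℝ), μ (Icc (-1:ℝ) 1)ᶜ = 0 → μ (Iio (-1:ℝ)) = 0 := by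
    intro μ hsupp
    refine measure_mono_null (fun z hz => ?_) hsupp
    simp only [mem_compl_iff, mem_Icc, not_and_or, not_le]
    exact Or.inl (by exact hz)
  -- Icc (-1) y = Iic y in measure
  have eIcc : ∀ (μ : Measure ℝ), μ (Icc (-1:ℝ) 1)ᶜ = 0 → ∀ y : ℝ, -1 ≤ y →
      μ (Icc (-1:ℝ) y) = μ (Iic y) := by
    intro μ hsupp y hy
    refine le_antisymm (measure_mono Icc_subset_Iic_self) ?_
    have hsub : Iic y ⊆ Icc (-1:ℝ) y ∪ Iio (-1:ℝ) := by
      intro z hz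
      rcases le_or_gt (-1:ℝ) z with h | h
      · exact Or.inl ⟨h, hz⟩
      · exact Or.inr h
    calc μ (Iic y) ≤ μ (Icc (-1:ℝ) y ∪ Iio (-1:ℝ)) := measure_mono hsub
      _ ≤ μ (Icc (-1:ℝ) y) + μ (Iio (-1:ℝ)) := measure_union_le _ _
      _ = μ (Icc (-1:ℝ) y) := by rw [hIio_null μ hsupp, add_zero]
  -- Iio y = Iic y in measure (atomless)
  have eIio : ∀ (μ : Measure ℝ), (∀ x : ℝ, μ {x} = 0) → ∀ y : ℝ,
      μ (Iio y) = μ (Iic y) := by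
    intro μ hat y
    refine le_antisymm (measure_mono Iio_subset_Iic_self) ?_
    have hsub : Iic y ⊆ Iio y ∪ {y} := by
      intro z hz
      simp only [mem_Iic] at hz
      rcases lt_or_eq_of_le hz with h | h
      · exact Or.inl h
      · exact Or.inr (by simp [h])
    calc μ (Iic y) ≤ μ (Iio y ∪ {y}) := measure_mono hsub
      _ ≤ μ (Iio y) + μ {y} := measure_union_le _ _
      _ = μ (Iio y) := by rw [hat, add_zero]
  -- Ici complement formula
  have eIci : ∀ (μ : Measure ℝ) (_ : IsFiniteMeasure μ), (∀ x : ℝ, μ {x} = 0) → ∀ y : ℝ,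
      (μ (Ici y)).toReal = (μ univ).toReal - (μ (Iic y)).toReal := by
    intro μ hfin hat y
    have h := measure_add_measure_compl (μ := μ) (measurableSet_Ici (a := y))
    rw [compl_Ici, eIio μ hat y] at h
    have h1 : (μ (Ici y)).toReal + (μ (Iic y)).toReal = (μ univ).toReal := by
      rw [← ENNReal.toReal_add (measure_ne_top _ _) (measure_ne_top _ _), h]
    linarith
  -- measurability
  have hfm : Measurable f := by
    have : f = fun x => f₁ x - f₂ x := funext hf
    rw [this]; exact f₁.mono.measurable.sub f₂.mono.measurable
  have hTmeas : Measurable T := by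
    have hmono : ∀ μ : Measure ℝ, Monotone fun x : ℝ => μ (Icc (-1:ℝ) x) := fun μ a b hab =>
      measure_mono (Icc_subset_Icc_right hab)
    have : T = fun x => (μp (Icc (-1:ℝ) x)).toReal - (μm (Icc (-1:ℝ) x)).toReal := funext hT
    rw [this]
    exact (ENNReal.measurable_toReal.comp (hmono μp).measurable).sub
      (ENNReal.measurable_toReal.comp (hmono μm).measurable)
  -- bounds
  set Mp : ℝ := (μp univ).toReal with hMp
  set Mm : ℝ := (μm univ).toReal with hMm
  have hMeq : Mp = Mm := by rw [hMp, hMm, hmass]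
  set CT : ℝ := Mp + Mm with hCT
  have hTbd : ∀ y : ℝ, |T y| ≤ CT := by
    intro y
    have h1 : (μp (Icc (-1:ℝ) y)).toReal ≤ Mp :=
      ENNReal.toReal_mono (measure_ne_top _ _) (measure_mono (subset_univ _))
    have h2 : (μm (Icc (-1:ℝ) y)).toReal ≤ Mm :=
      ENNReal.toReal_mono (measure_ne_top _ _) (measure_mono (subset_univ _))
    have h3 : (0:ℝ) ≤ (μp (Icc (-1:ℝ) y)).toReal := ENNReal.toReal_nonneg
    have h4 : (0:ℝ) ≤ (μm (Icc (-1:ℝ) y)).toReal := ENNReal.toReal_nonneg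
    rw [hT, abs_le]; constructor <;> [linarith; linarith]
  set Cf : ℝ := |f₁ (-1)| + |f₁ 1| + |f₂ (-1)| + |f₂ 1| with hCf
  have hfbd : ∀ y ∈ Icc (-1:ℝ) 1, |f y| ≤ Cf := by
    intro y hy
    have h11 : f₁ (-1) ≤ f₁ y := f₁.mono hy.1
    have h12 : f₁ y ≤ f₁ 1 := f₁.mono hy.2
    have h21 : f₂ (-1) ≤ f₂ y := f₂.mono hy.1
    have h22 : f₂ y ≤ f₂ 1 := f₂.mono hy.2
    have a1 := le_abs_self (f₁ 1); have a2 := neg_abs_le (f₁ (-1))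
    have a3 := le_abs_self (f₂ 1); have a4 := neg_abs_le (f₂ (-1))
    have b1 := le_abs_self (f₁ (-1)); have b3 := le_abs_self (f₂ (-1))
    have c1 := abs_nonneg (f₁ (-1)); have c2 := abs_nonneg (f₁ 1)
    have c3 := abs_nonneg (f₂ (-1)); have c4 := abs_nonneg (f₂ 1)
    have a2' := neg_abs_le (f₂ 1); have a1' := neg_abs_le (f₁ 1)
    rw [hf, hCf, abs_le]; constructor <;> linarith
  have hfaep : ∀ᵐ y ∂μp, |f y| ≤ Cf := haep.mono fun y hy => hfbd y hy
  have hfaem : ∀ᵐ y ∂μm, |f y| ≤ Cf := haem.mono fun y hy => hfbd y hy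
  -- restrict to Icc is the whole measure
  have hresp : μp.restrict (Icc (-1:ℝ) 1) = μp := Measure.restrict_eq_self_of_ae_mem haep
  have hresm : μm.restrict (Icc (-1:ℝ) 1) = μm := Measure.restrict_eq_self_of_ae_mem haem
  -- inner set integrals over Icc = over Iic
  have hres_inner : ∀ (μ : Measure ℝ), μ (Icc (-1:ℝ) 1)ᶜ = 0 → ∀ x : ℝ, -1 ≤ x →
      μ.restrict (Icc (-1:ℝ) x) = μ.restrict (Iic x) := by
    intro μ hsupp x hx
    refine Measure.restrict_congr_set (ae_eq_set.2 ⟨?_, ?_⟩)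
    · have h0 : Icc (-1:ℝ) x \ Iic x = ∅ := diff_eq_empty.2 Icc_subset_Iic_self
      rw [h0]; exact measure_empty
    · refine measure_mono_null ?_ (hIio_null μ hsupp)
      intro z hz
      rcases hz with ⟨hz1, hz2⟩
      simp only [mem_Icc, not_and_or, not_le] at hz2
      simp only [mem_Iic] at hz1
      rcases hz2 with h | h
      · exact h
      · exact absurd hz1 (not_le.2 h)
  have hFeq : ∀ x ∈ Icc (-1:ℝ) 1, F x = (∫ y in Iic x, f y ∂μp) - ∫ y in Iic x, f y ∂μm := by
    intro x hx
    rw [hF, hres_inner μp hp_supp x hx.1, hres_inner μm hm_supp x hx.1]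
  -- strong measurability and integrability of the inner integral functions
  have hH0 : Measurable fun p : ℝ × ℝ => (Iic p.1).indicator f p.2 := by
    have : (fun p : ℝ × ℝ => (Iic p.1).indicator f p.2)
        = fun p : ℝ × ℝ => if p.2 ≤ p.1 then f p.2 else 0 := by
      funext p; simp [Set.indicator_apply]
    rw [this]
    exact Measurable.ite (measurableSet_le measurable_snd measurable_fst)
      (hfm.comp measurable_snd) measurable_const
  have hG : ∀ (μa μb : Measure ℝ), IsFiniteMeasure μa → IsFiniteMeasure μb →
      μa (Icc (-1:ℝ) 1)ᶜ = 0 →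
      Integrable (fun x => ∫ y in Iic x, f y ∂μa) μb := by
    intro μa μb ha hb hsupp
    haveI := ha; haveI := hb
    have hsm : StronglyMeasurable fun x : ℝ => ∫ y, (Iic x).indicator f y ∂μa :=
      hH0.stronglyMeasurable.integral_prod_right'
    have heq : (fun x : ℝ => ∫ y, (Iic x).indicator f y ∂μa)
        = fun x : ℝ => ∫ y in Iic x, f y ∂μa := by
      funext x; exact integral_indicator measurableSet_Iic
    rw [heq] at hsm
    refine aux_int_bdd hsm.aestronglyMeasurable (C := Cf * (μa univ).toReal) (ae_of_all _ ?_)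
    intro x
    have haea : ∀ᵐ y ∂μa, y ∈ Icc (-1:ℝ) 1 := mem_ae_iff.mpr hsupp
    have hb1 : ‖∫ y in Iic x, f y ∂μa‖ ≤ Cf * (μa.restrict (Iic x) univ).toReal := by
      refine norm_integral_le_of_norm_le_const ?_
      refine (ae_restrict_of_ae haea).mono fun y hy => ?_
      rw [Real.norm_eq_abs]; exact hfbd y hy
    rw [Real.norm_eq_abs] at hb1
    refine hb1.trans ?_
    have h2 : (μa.restrict (Iic x) univ).toReal ≤ (μa univ).toReal := by
      rw [Measure.restrict_apply_univ]
      exact ENNReal.toReal_mono (measure_ne_top _ _) (measure_mono (subset_univ _))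
    have hCf0 : 0 ≤ Cf := by positivity
    exact mul_le_mul_of_nonneg_left h2 hCf0
  -- the Ici-cdf functions
  have hIci_meas : ∀ (μ : Measure ℝ), IsFiniteMeasure μ → (∀ x : ℝ, μ {x} = 0) →
      Measurable (fun y : ℝ => (μ (Ici y)).toReal) := by
    intro μ hfin hat
    have : (fun y : ℝ => (μ (Ici y)).toReal)
        = fun y => (μ univ).toReal - (μ (Iic y)).toReal := funext (eIci μ hfin hat)
    rw [this]
    exact measurable_const.sub (aux_meas_cdf μ)
  have hIci_bd : ∀ (μ : Measure ℝ), IsFiniteMeasure μ → ∀ y : ℝ,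
      (μ (Ici y)).toReal ≤ (μ univ).toReal := by
    intro μ h y; haveI := h
    exact ENNReal.toReal_mono (measure_ne_top _ _) (measure_mono (subset_univ _))
  have hint_fh : ∀ (μa μb : Measure ℝ), IsFiniteMeasure μa → IsFiniteMeasure μb →
      μa (Icc (-1:ℝ) 1)ᶜ = 0 → (∀ x : ℝ, μb {x} = 0) →
      Integrable (fun y => f y * (μb (Ici y)).toReal) μa := by
    intro μa μb ha hb hsupp hat
    haveI := ha; haveI := hb
    refine aux_int_bdd ((hfm.mul (hIci_meas μb hb hat)).aestronglyMeasurable)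
      (C := Cf * (μb univ).toReal) ?_
    have haea : ∀ᵐ y ∂μa, y ∈ Icc (-1:ℝ) 1 := mem_ae_iff.mpr hsupp
    refine haea.mono fun y hy => ?_
    rw [abs_mul]
    have h1 := hfbd y hy
    have h2 : |(μb (Ici y)).toReal| ≤ (μb univ).toReal := by
      rw [abs_of_nonneg ENNReal.toReal_nonneg]; exact hIci_bd μb hb y
    exact mul_le_mul h1 h2 (abs_nonneg _) (by positivity)
  have hint_gT : ∀ (g : ℝ → ℝ), Measurable g → ∀ Cg : ℝ, (∀ y ∈ Icc (-1:ℝ) 1, |g y| ≤ Cg) →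
      ∀ (μa : Measure ℝ), IsFiniteMeasure μa → μa (Icc (-1:ℝ) 1)ᶜ = 0 →
      Integrable (fun y => g y * T y) μa := by
    intro g hg Cg hCg μa ha hsupp; haveI := ha
    have hCg0 : 0 ≤ Cg := (abs_nonneg _).trans (hCg 0 ⟨by norm_num, by norm_num⟩)
    refine aux_int_bdd ((hg.mul hTmeas).aestronglyMeasurable) (C := Cg * CT) ?_
    have haea : ∀ᵐ y ∂μa, y ∈ Icc (-1:ℝ) 1 := mem_ae_iff.mpr hsupp
    refine haea.mono fun y hy => ?_
    rw [abs_mul]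
    exact mul_le_mul (hCg y hy) (hTbd y) (abs_nonneg _) hCg0
  have e1 : ∀ (μb : Measure ℝ), ∀ hb : IsFiniteMeasure μb,
      μb.restrict (Icc (-1:ℝ) 1) = μb → (∀ᵐ x ∂μb, x ∈ Icc (-1:ℝ) 1) →
      ∫ x in Icc (-1:ℝ) 1, F x ∂μb
        = (∫ y, f y * (μb (Ici y)).toReal ∂μp) - ∫ y, f y * (μb (Ici y)).toReal ∂μm := by
    intro μb hb hres haeb
    haveI := hb
    calc ∫ x in Icc (-1:ℝ) 1, F x ∂μb = ∫ x, F x ∂μb := by rw [hres]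
      _ = ∫ x, ((∫ y in Iic x, f y ∂μp) - ∫ y in Iic x, f y ∂μm) ∂μb :=
          integral_congr_ae (haeb.mono fun x hx => hFeq x hx)
      _ = (∫ x, (∫ y in Iic x, f y ∂μp) ∂μb) - ∫ x, (∫ y in Iic x, f y ∂μm) ∂μb :=
          integral_sub (hG μp μb inferInstance hb hp_supp) (hG μm μb inferInstance hb hm_supp)
      _ = (∫ y, f y * (μb (Ici y)).toReal ∂μp) - ∫ y, f y * (μb (Ici y)).toReal ∂μm := by
          rw [aux_fub1 μb μp hfm hfaep, aux_fub1 μb μm hfm hfaem]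
  have hfT_eq : ∀ (μa : Measure ℝ), ∀ ha : IsFiniteMeasure μa, μa (Icc (-1:ℝ) 1)ᶜ = 0 →
      (∫ y, f y * (μp (Ici y)).toReal ∂μa) - ∫ y, f y * (μm (Ici y)).toReal ∂μa
        = - ∫ y, f y * T y ∂μa := by
    intro μa ha hsupp; haveI := ha
    rw [← integral_sub (hint_fh μa μp ha inferInstance hsupp hp_atomless)
      (hint_fh μa μm ha inferInstance hsupp hm_atomless), ← integral_neg]
    have haea : ∀ᵐ y ∂μa, y ∈ Icc (-1:ℝ) 1 := mem_ae_iff.mpr hsupp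
    refine integral_congr_ae (haea.mono fun y hy => ?_)
    have h1 := eIci μp inferInstance hp_atomless y
    have h2 := eIci μm inferInstance hm_atomless y
    have h3 : T y = (μp (Iic y)).toReal - (μm (Iic y)).toReal := by
      rw [hT, eIcc μp hp_supp y hy.1, eIcc μm hm_supp y hy.1]
    dsimp only
    rw [h1, h2, h3, show (μp univ).toReal = (μm univ).toReal from by rw [hmass]]
    ring
  have M1 : (∫ x in Icc (-1:ℝ) 1, F x ∂μp) - ∫ x in Icc (-1:ℝ) 1, F x ∂μm
      = (∫ y, f y * T y ∂μm) - ∫ y, f y * T y ∂μp := by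
    rw [e1 μp inferInstance hresp haep, e1 μm inferInstance hresm haem]
    have r1 := hfT_eq μp inferInstance hp_supp
    have r2 := hfT_eq μm inferInstance hm_supp
    linarith [r1, r2]
  have hT_Iic : ∀ y ∈ Icc (-1:ℝ) 1, T y = (μp (Iic y)).toReal - (μm (Iic y)).toReal := by
    intro y hy
    rw [hT, eIcc μp hp_supp y hy.1, eIcc μm hm_supp y hy.1]
  have hintT : ∀ (μa : Measure ℝ), IsFiniteMeasure μa → Integrable T μa := by
    intro μa ha; haveI := ha
    exact aux_int_bdd hTmeas.aestronglyMeasurable (ae_of_all _ hTbd)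
  have hIT : (∫ y, T y ∂μp) - ∫ y, T y ∂μm = 0 := by
    have c1 : ∫ y, T y ∂μp = ∫ y, ((μp (Iic y)).toReal - (μm (Iic y)).toReal) ∂μp :=
      integral_congr_ae (haep.mono fun y hy => hT_Iic y hy)
    have c2 : ∫ y, T y ∂μm = ∫ y, ((μp (Iic y)).toReal - (μm (Iic y)).toReal) ∂μm :=
      integral_congr_ae (haem.mono fun y hy => hT_Iic y hy)
    rw [c1, c2, aux_quad μp μm hp_atomless hm_atomless, hmass, sub_self]
    norm_num
  have hITz : ∀ z ∈ Ioc (-1:ℝ) 1,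
      (∫ y in Ici z, T y ∂μp) - ∫ y in Ici z, T y ∂μm = -(T z ^ 2 / 2) := by
    intro z hz
    have hsplit : ∀ (μa : Measure ℝ), IsFiniteMeasure μa →
        ∫ y in Ici z, T y ∂μa = (∫ y, T y ∂μa) - ∫ y in Iio z, T y ∂μa := by
      intro μa ha; haveI := ha
      have h := integral_add_compl (measurableSet_Ici (a := z)) (hintT μa ha)
      rw [compl_Ici] at h
      linarith [h]
    rw [hsplit μp inferInstance, hsplit μm inferInstance]
    have hatp' : ∀ x : ℝ, (μp.restrict (Iio z)) {x} = 0 := fun x => by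
      rw [Measure.restrict_apply (measurableSet_singleton x)]
      exact measure_mono_null inter_subset_left (hp_atomless x)
    have hatm' : ∀ x : ℝ, (μm.restrict (Iio z)) {x} = 0 := fun x => by
      rw [Measure.restrict_apply (measurableSet_singleton x)]
      exact measure_mono_null inter_subset_left (hm_atomless x)
    have hIic_res : ∀ (μa : Measure ℝ), ∀ y : ℝ, y < z →
        (μa.restrict (Iio z)) (Iic y) = μa (Iic y) := by
      intro μa y hy
      have hsub : Iic y ∩ Iio z = Iic y :=
        inter_eq_self_of_subset_left (fun w hw => lt_of_le_of_lt hw hy)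
      rw [Measure.restrict_apply measurableSet_Iic, hsub]
    have hcong : ∀ (μa : Measure ℝ), IsFiniteMeasure μa → μa (Icc (-1:ℝ) 1)ᶜ = 0 →
        ∫ y, T y ∂(μa.restrict (Iio z))
          = ∫ y, (((μp.restrict (Iio z)) (Iic y)).toReal
              - ((μm.restrict (Iio z)) (Iic y)).toReal) ∂(μa.restrict (Iio z)) := by
      intro μa ha hsupp; haveI := ha
      refine integral_congr_ae ?_
      have h1 : ∀ᵐ y ∂μa.restrict (Iio z), y ∈ Iio z := ae_restrict_mem measurableSet_Iio
      have h2 : ∀ᵐ y ∂μa.restrict (Iio z), y ∈ Icc (-1:ℝ) 1 :=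
        ae_restrict_of_ae (mem_ae_iff.mpr hsupp)
      filter_upwards [h1, h2] with y hy1 hy2
      rw [hT_Iic y hy2, hIic_res μp y hy1, hIic_res μm y hy1]
    have hres_univ : ∀ (μa : Measure ℝ), (∀ x : ℝ, μa {x} = 0) → μa (Icc (-1:ℝ) 1)ᶜ = 0 →
        ((μa.restrict (Iio z)) univ).toReal = (μa (Icc (-1:ℝ) z)).toReal := by
      intro μa hat hsupp
      rw [Measure.restrict_apply_univ, eIio μa hat z, ← eIcc μa hsupp z (le_of_lt hz.1)]
    have q := aux_quad (μp.restrict (Iio z)) (μm.restrict (Iio z)) hatp' hatm'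
    have hQ : (∫ y in Iio z, T y ∂μp) - ∫ y in Iio z, T y ∂μm = T z ^ 2 / 2 := by
      have g1 : ∫ y in Iio z, T y ∂μp = ∫ y, T y ∂(μp.restrict (Iio z)) := rfl
      have g2 : ∫ y in Iio z, T y ∂μm = ∫ y, T y ∂(μm.restrict (Iio z)) := rfl
      rw [g1, g2, hcong μp inferInstance hp_supp, hcong μm inferInstance hm_supp, q,
        hres_univ μp hp_atomless hp_supp, hres_univ μm hm_atomless hm_supp, ← hT z]
    linarith [hQ, hIT]
  -- generic bound for Stieltjes functions on Icc
  have hgbd : ∀ (g : StieltjesFunction ℝ), ∀ y ∈ Icc (-1:ℝ) 1, |g y| ≤ |g (-1)| + |g 1| := by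
    intro g y hy
    have h1 : g (-1) ≤ g y := g.mono hy.1
    have h2 : g y ≤ g 1 := g.mono hy.2
    have a1 := le_abs_self (g 1); have a2 := neg_abs_le (g (-1))
    have a3 := abs_nonneg (g (-1)); have a4 := abs_nonneg (g 1)
    rw [abs_le]; constructor <;> linarith
  -- the main step-2 identity, for a single Stieltjes function g
  have hstep2 : ∀ (g : StieltjesFunction ℝ),
      (∫ y, g y * T y ∂μp) - ∫ y, g y * T y ∂μm
        = -(1/2) * ∫ z in Icc (-1:ℝ) 1, T z ^ 2 ∂g.measure := by
    intro g
    set ν' := g.measure.restrict (Ioc (-1:ℝ) 1) with hν'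
    haveI hν'fin : IsFiniteMeasure ν' := by
      refine ⟨?_⟩
      rw [hν', Measure.restrict_apply_univ, g.measure_Ioc]
      exact ENNReal.ofReal_lt_top
    have hrep : ∀ y ∈ Icc (-1:ℝ) 1, g y = g (-1) + (ν' (Iic y)).toReal := by
      intro y hy
      have h1 : ν' (Iic y) = g.measure (Ioc (-1:ℝ) y) := by
        rw [hν', Measure.restrict_apply measurableSet_Iic]
        congr 1
        ext w
        simp only [mem_inter_iff, mem_Iic, mem_Ioc]
        constructor
        · rintro ⟨hw1, hw2, hw3⟩; exact ⟨hw2, hw1⟩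
        · rintro ⟨hw1, hw2⟩; exact ⟨hw2, hw1, hw2.trans hy.2⟩
      rw [h1, g.measure_Ioc, ENNReal.toReal_ofReal (sub_nonneg.2 (g.mono hy.1))]
      ring
    have hsplitg : ∀ (μa : Measure ℝ), IsFiniteMeasure μa → μa (Icc (-1:ℝ) 1)ᶜ = 0 →
        (∀ᵐ y ∂μa, y ∈ Icc (-1:ℝ) 1) →
        ∫ y, g y * T y ∂μa
          = g (-1) * (∫ y, T y ∂μa) + ∫ z, (∫ y in Ici z, T y ∂μa) ∂ν' := by
      intro μa ha hsupp haea; haveI := ha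
      have e0 : ∫ y, g y * T y ∂μa
          = ∫ y, (g (-1) * T y + T y * (ν' (Iic y)).toReal) ∂μa := by
        refine integral_congr_ae (haea.mono fun y hy => ?_)
        dsimp only
        rw [hrep y hy]; ring
      have i2 : Integrable (fun y => T y * (ν' (Iic y)).toReal) μa := by
        refine aux_int_bdd ((hTmeas.mul (aux_meas_cdf ν')).aestronglyMeasurable)
          (C := CT * (ν' univ).toReal) (ae_of_all _ fun y => ?_)
        rw [abs_mul]
        refine mul_le_mul (hTbd y) ?_ (abs_nonneg _) (le_trans (abs_nonneg _) (hTbd 0))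
        rw [abs_of_nonneg ENNReal.toReal_nonneg]
        exact ENNReal.toReal_mono (measure_ne_top _ _) (measure_mono (subset_univ _))
      rw [e0, integral_add ((hintT μa ha).const_mul _) i2, integral_const_mul]
      congr 1
      exact aux_fub2 μa ν' hTmeas (ae_of_all _ hTbd)
    rw [hsplitg μp inferInstance hp_supp haep, hsplitg μm inferInstance hm_supp haem]
    have hIb_int : ∀ (μa : Measure ℝ), IsFiniteMeasure μa →
        Integrable (fun z => ∫ y in Ici z, T y ∂μa) ν' := by
      intro μa ha; haveI := ha
      have hHT : Measurable fun p : ℝ × ℝ => (Ici p.2).indicator T p.1 := by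
        have heq : (fun p : ℝ × ℝ => (Ici p.2).indicator T p.1)
            = fun p : ℝ × ℝ => if p.2 ≤ p.1 then T p.1 else 0 := by
          funext p; simp [Set.indicator_apply]
        rw [heq]
        exact Measurable.ite (measurableSet_le measurable_snd measurable_fst)
          (hTmeas.comp measurable_fst) measurable_const
      have hsm : StronglyMeasurable fun z : ℝ => ∫ y, (Ici z).indicator T y ∂μa :=
        hHT.stronglyMeasurable.integral_prod_left'
      have heq2 : (fun z : ℝ => ∫ y, (Ici z).indicator T y ∂μa)
          = fun z => ∫ y in Ici z, T y ∂μa := by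
        funext z; exact integral_indicator measurableSet_Ici
      rw [heq2] at hsm
      refine aux_int_bdd hsm.aestronglyMeasurable (C := CT * (μa univ).toReal)
        (ae_of_all _ fun z => ?_)
      have hb1 : ‖∫ y in Ici z, T y ∂μa‖ ≤ CT * (μa.restrict (Ici z) univ).toReal :=
        norm_integral_le_of_norm_le_const
          (ae_of_all _ fun y => by rw [Real.norm_eq_abs]; exact hTbd y)
      rw [Real.norm_eq_abs] at hb1
      refine hb1.trans (mul_le_mul_of_nonneg_left ?_ (le_trans (abs_nonneg _) (hTbd 0)))
      rw [Measure.restrict_apply_univ]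
      exact ENNReal.toReal_mono (measure_ne_top _ _) (measure_mono (subset_univ _))
    have comb : (∫ z, (∫ y in Ici z, T y ∂μp) ∂ν') - ∫ z, (∫ y in Ici z, T y ∂μm) ∂ν'
        = ∫ z, -(T z ^ 2 / 2) ∂ν' := by
      rw [← integral_sub (hIb_int μp inferInstance) (hIb_int μm inferInstance)]
      refine integral_congr_ae ?_
      have haez : ∀ᵐ z ∂ν', z ∈ Ioc (-1:ℝ) 1 := by
        rw [hν']; exact ae_restrict_mem measurableSet_Ioc
      exact haez.mono fun z hz => hITz z hz
    have hT2meas : Measurable fun z : ℝ => T z ^ 2 := hTmeas.pow_const 2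
    have hT2bd : ∀ z : ℝ, |T z ^ 2| ≤ CT ^ 2 := by
      intro z
      rw [abs_pow]
      exact pow_le_pow_left₀ (abs_nonneg _) (hTbd z) 2
    have hvI : ∫ z, -(T z ^ 2 / 2) ∂ν'
        = -(1/2) * ∫ z in Icc (-1:ℝ) 1, T z ^ 2 ∂g.measure := by
      have e : ∫ z, -(T z ^ 2 / 2) ∂ν' = -(1/2) * ∫ z, T z ^ 2 ∂ν' := by
        rw [← integral_const_mul]
        congr 1; funext z; ring
      rw [e]
      congr 1
      have hicc : Icc (-1:ℝ) 1 = {(-1:ℝ)} ∪ Ioc (-1:ℝ) 1 := by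
        rw [← Ioc_insert_left (by norm_num : (-1:ℝ) ≤ 1), insert_eq]
      have hfin1 : g.measure {(-1:ℝ)} < ⊤ := by
        have hsub : {(-1:ℝ)} ⊆ Ioc (-2:ℝ) (-1) := by
          intro w hw
          simp only [mem_singleton_iff] at hw
          simp only [mem_Ioc, hw]
          norm_num
        refine lt_of_le_of_lt (measure_mono hsub) ?_
        rw [g.measure_Ioc]; exact ENNReal.ofReal_lt_top
      have hint1 : IntegrableOn (fun z => T z ^ 2) {(-1:ℝ)} g.measure := by
        haveI : IsFiniteMeasure (g.measure.restrict {(-1:ℝ)}) := by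
          refine ⟨?_⟩
          rw [Measure.restrict_apply_univ]
          exact hfin1
        exact aux_int_bdd hT2meas.aestronglyMeasurable (ae_of_all _ hT2bd)
      have hint2 : IntegrableOn (fun z => T z ^ 2) (Ioc (-1:ℝ) 1) g.measure :=
        aux_int_bdd hT2meas.aestronglyMeasurable (ae_of_all _ hT2bd)
      have hT0 : T (-1:ℝ) = 0 := by
        rw [hT, Icc_self, hp_atomless, hm_atomless]; simp
      rw [hicc, setIntegral_union (disjoint_singleton_left.mpr (by simp)) measurableSet_Ioc
        hint1 hint2, integral_singleton, hT0]
      simp [hν']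
    have hAeq : (∫ y, T y ∂μp) = ∫ y, T y ∂μm := by linarith [hIT]
    rw [hAeq]
    linarith [comb, hvI]
  have hfsplit : ∀ (μa : Measure ℝ), IsFiniteMeasure μa → μa (Icc (-1:ℝ) 1)ᶜ = 0 →
      ∫ y, f y * T y ∂μa = (∫ y, f₁ y * T y ∂μa) - ∫ y, f₂ y * T y ∂μa := by
    intro μa ha hsupp; haveI := ha
    rw [← integral_sub (hint_gT f₁ f₁.mono.measurable _ (hgbd f₁) μa ha hsupp)
      (hint_gT f₂ f₂.mono.measurable _ (hgbd f₂) μa ha hsupp)]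
    refine integral_congr_ae (ae_of_all _ fun y => ?_)
    dsimp only
    rw [hf]; ring
  rw [M1, hfsplit μp inferInstance hp_supp, hfsplit μm inferInstance hm_supp]
  have s1 := hstep2 f₁
  have s2 := hstep2 f₂
  linarith [s1, s2]
end

section
/- Let p ∈ (2,∞), M ≥ 0, and let θ : ℝ → ℝ satisfy |θ(x)| ≤ M for all x ∈ ℝ and θ(b) − θ(a) = ∫_a^b g(s) ds for all a ≤ b, where g ∈ L^p(ℝ). For a measurable v : ℝ → ℝ set N(v)² := ∫_ℝ v(x)² dx + ∫∫_{ℝ×ℝ} ( (v(x) − v(y))/(x − y) )² dx dy (the squared H^{1/2}(ℝ) norm, with L² norm plus Gagliardo seminorm). Then for every u ∈ L²(ℝ) with N(u) < ∞: N(θ·u)² ≤ ( 19·M² + (4p/(p−2))·‖g‖²_{L^p(ℝ)} )·N(u)². In particular θ·u again has finite H^{1/2}(ℝ) norm. -/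
open MeasureTheory Filter Set
open scoped Real Topology ENNReal

/-- The squared `H^{1/2}(ℝ)` norm: `L²` norm squared plus Gagliardo seminorm
squared, as an extended-real valued quantity. -/
noncomputable def H12normSq (v : ℝ → ℝ) : ℝ≥0∞ :=
  (∫⁻ x : ℝ, ENNReal.ofReal (v x ^ 2)) +
    ∫⁻ q : ℝ × ℝ, ENNReal.ofReal (((v q.1 - v q.2) / (q.1 - q.2)) ^ 2)

lemma H12normSq_congr {u v : ℝ → ℝ} (h : u =ᵐ[(volume : Measure ℝ)] v) :
    H12normSq u = H12normSq v := by
  unfold H12normSq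
  have h1 : (u ∘ Prod.fst) =ᵐ[(volume : Measure (ℝ × ℝ))] (v ∘ Prod.fst) := by
    rw [show (volume : Measure (ℝ × ℝ)) = (volume : Measure ℝ).prod volume from (Measure.volume_eq_prod ℝ ℝ)]
    exact Measure.quasiMeasurePreserving_fst.ae_eq_comp h
  have h2 : (u ∘ Prod.snd) =ᵐ[(volume : Measure (ℝ × ℝ))] (v ∘ Prod.snd) := by
    rw [show (volume : Measure (ℝ × ℝ)) = (volume : Measure ℝ).prod volume from (Measure.volume_eq_prod ℝ ℝ)]
    exact Measure.quasiMeasurePreserving_snd.ae_eq_comp h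
  congr 1
  · exact lintegral_congr_ae (h.mono fun x hx => by simp only [hx])
  · exact lintegral_congr_ae ((h1.and h2).mono fun q hq => by
      simp only [Function.comp_apply] at hq
      simp only [hq.1, hq.2])


lemma aux_sq_split (A B C D t : ℝ) :
    ((A*B - C*D)/t)^2 ≤ 2*A^2*((B-D)/t)^2 + 2*D^2*((A-C)/t)^2 := by
  rcases eq_or_ne t 0 with rfl | ht
  · simp only [div_zero, ne_eq, OfNat.ofNat_ne_zero, not_false_eq_true, zero_pow]
    positivity
  · have h : (A*B - C*D)/t = A*((B-D)/t) + D*((A-C)/t) := by field_simp; ring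
    rw [h]
    nlinarith [sq_nonneg (A*((B-D)/t) - D*((A-C)/t))]


lemma aux_neg_set (f : ℝ → ℝ≥0∞) (hf : ∀ t, f (-t) = f t) (s : Set ℝ) :
    ∫⁻ t in Neg.neg ⁻¹' s, f t = ∫⁻ t in s, f t := by
  have h := (Measure.measurePreserving_neg (volume : Measure ℝ)).setLIntegral_comp_preimage_emb
    (Homeomorph.neg ℝ).measurableEmbedding f s
  simpa [hf] using h

lemma aux_near (b : ℝ) (hb0 : 0 < b) (hb1 : b < 1) :
    ∫⁻ t in {t : ℝ | |t| ≤ 1}, ENNReal.ofReal (|t| ^ (-b)) ≤ ENNReal.ofReal (2/(1-b)) := by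
  have hint : IntegrableOn (fun t : ℝ => t ^ (-b)) (Ioc 0 1) := by
    have := (intervalIntegral.intervalIntegrable_rpow' (a := 0) (b := 1) (r := -b) (by linarith))
    rwa [intervalIntegrable_iff, uIoc_of_le zero_le_one] at this
  have hval : ∫ t in Ioc (0:ℝ) 1, t ^ (-b) = 1/(1-b) := by
    rw [← intervalIntegral.integral_of_le zero_le_one]
    rw [integral_rpow (Or.inl (by linarith))]
    rw [Real.one_rpow, Real.zero_rpow (by linarith)]
    norm_num
    ring
  have key : ∫⁻ t in Icc (0:ℝ) 1, ENNReal.ofReal (|t| ^ (-b)) = ENNReal.ofReal (1/(1-b)) := by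
    rw [Measure.restrict_congr_set Ioc_ae_eq_Icc.symm]
    rw [setLIntegral_congr_fun measurableSet_Ioc
      (fun t (ht : t ∈ Ioc (0:ℝ) 1) => by rw [abs_of_pos ht.1])]
    rw [← ofReal_integral_eq_lintegral_ofReal hint
      ((ae_restrict_iff' measurableSet_Ioc).2 (ae_of_all _ fun t ht => Real.rpow_nonneg ht.1.le _))]
    rw [hval]
  have negside : ∫⁻ t in Icc (-1:ℝ) 0, ENNReal.ofReal (|t| ^ (-b))
      = ENNReal.ofReal (1/(1-b)) := by
    have hpre : Neg.neg ⁻¹' (Icc (0:ℝ) 1) = Icc (-1:ℝ) 0 := by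
      ext t; simp only [mem_preimage, mem_Icc]; constructor <;> intro h <;>
        constructor <;> linarith [h.1, h.2]
    rw [← hpre, aux_neg_set _ (fun t => by rw [abs_neg]), key]
  calc ∫⁻ t in {t : ℝ | |t| ≤ 1}, ENNReal.ofReal (|t| ^ (-b))
      ≤ ∫⁻ t in Icc (-1:ℝ) 0 ∪ Icc 0 1, ENNReal.ofReal (|t| ^ (-b)) := by
        apply lintegral_mono_set
        intro t ht
        simp only [mem_setOf_eq, abs_le] at ht
        rcases le_total t 0 with h | h
        · exact Or.inl ⟨ht.1, h⟩
        · exact Or.inr ⟨h, ht.2⟩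
    _ ≤ (∫⁻ t in Icc (-1:ℝ) 0, ENNReal.ofReal (|t| ^ (-b)))
        + ∫⁻ t in Icc (0:ℝ) 1, ENNReal.ofReal (|t| ^ (-b)) := lintegral_union_le _ _ _
    _ = ENNReal.ofReal (2/(1-b)) := by
        rw [negside, key, ← ENNReal.ofReal_add (div_nonneg zero_le_one (by linarith)) (div_nonneg zero_le_one (by linarith))]
        ring_nf

lemma aux_far :
    ∫⁻ t in {t : ℝ | 1 < |t|}, ENNReal.ofReal (|t| ^ (-2:ℝ)) ≤ 2 := by
  have hint : IntegrableOn (fun t : ℝ => t ^ (-2:ℝ)) (Ioi 1) :=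
    integrableOn_Ioi_rpow_of_lt (by norm_num) one_pos
  have hval : ∫ t in Ioi (1:ℝ), t ^ (-2:ℝ) = 1 := by
    rw [integral_Ioi_rpow_of_lt (by norm_num) one_pos]
    norm_num [Real.one_rpow]
  have key : ∫⁻ t in Ioi (1:ℝ), ENNReal.ofReal (|t| ^ (-2:ℝ)) = ENNReal.ofReal 1 := by
    rw [setLIntegral_congr_fun measurableSet_Ioi
      (fun t (ht : t ∈ Ioi (1:ℝ)) => by
        rw [abs_of_pos (lt_trans one_pos ht)])]
    rw [← ofReal_integral_eq_lintegral_ofReal hint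
      ((ae_restrict_iff' measurableSet_Ioi).2 (ae_of_all _ fun t ht =>
        Real.rpow_nonneg (le_of_lt (lt_trans one_pos ht)) _))]
    rw [hval]
  have negside : ∫⁻ t in Iio (-1:ℝ), ENNReal.ofReal (|t| ^ (-2:ℝ)) = ENNReal.ofReal 1 := by
    have hpre : Neg.neg ⁻¹' (Ioi (1:ℝ)) = Iio (-1:ℝ) := by
      ext t; simp only [mem_preimage, mem_Ioi, mem_Iio]; constructor <;> intro h <;> linarith
    rw [← hpre, aux_neg_set _ (fun t => by rw [abs_neg]), key]
  calc ∫⁻ t in {t : ℝ | 1 < |t|}, ENNReal.ofReal (|t| ^ (-2:ℝ))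
      ≤ ∫⁻ t in Iio (-1:ℝ) ∪ Ioi 1, ENNReal.ofReal (|t| ^ (-2:ℝ)) := by
        apply lintegral_mono_set
        intro t ht
        simp only [mem_setOf_eq] at ht
        rcases lt_abs.mp ht with h | h
        · exact Or.inr h
        · exact Or.inl (by simpa [mem_Iio] using by linarith : t ∈ Iio (-1:ℝ))
    _ ≤ (∫⁻ t in Iio (-1:ℝ), ENNReal.ofReal (|t| ^ (-2:ℝ)))
        + ∫⁻ t in Ioi (1:ℝ), ENNReal.ofReal (|t| ^ (-2:ℝ)) := lintegral_union_le _ _ _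
    _ = 2 := by
        rw [negside, key, ← ENNReal.ofReal_add (by norm_num) (by norm_num)]
        norm_num


lemma aux_holder (p : ℝ) (hp : 2 < p) (θ g : ℝ → ℝ)
    (hg_Lp : MemLp g (ENNReal.ofReal p) (volume : Measure ℝ))
    (hθg : ∀ a b : ℝ, a ≤ b → θ b - θ a = ∫ s in a..b, g s) :
    ∀ x y : ℝ, (θ x - θ y)^2 ≤ ((∫ x : ℝ, |g x| ^ p) ^ ((2:ℝ)/p)) * |x - y| ^ (2 - 2/p) := by
  have hp1 : (1:ℝ) < p := by linarith
  have hp0 : (0:ℝ) < p := by linarith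
  set I : ℝ := ∫ x : ℝ, |g x| ^ p with hI
  have hI0 : 0 ≤ I := integral_nonneg fun x => Real.rpow_nonneg (abs_nonneg _) _
  set q : ℝ := Real.conjExponent p with hq
  have hpq : p.HolderConjugate q := Real.HolderConjugate.conjExponent hp1
  have hq0 : 0 < q := hpq.symm.pos
  -- step 1 : global lintegral
  have hgint : Integrable (fun x => |g x| ^ p) (volume : Measure ℝ) := by
    have := hg_Lp.integrable_norm_rpow (by simp [ENNReal.ofReal_eq_zero]; linarith)
      (by simp)
    simpa [ENNReal.toReal_ofReal hp0.le, Real.norm_eq_abs] using this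
  have hglob : ∫⁻ a : ℝ, (ENNReal.ofReal |g a|) ^ p = ENNReal.ofReal I := by
    rw [hI, ofReal_integral_eq_lintegral_ofReal hgint
      (ae_of_all _ fun a => Real.rpow_nonneg (abs_nonneg _) _)]
    congr 1
    ext a
    rw [← ENNReal.ofReal_rpow_of_nonneg (abs_nonneg _) hp0.le]
  -- step 2 : main estimate for y ≤ x
  have main : ∀ x y : ℝ, y ≤ x →
      |θ x - θ y| ≤ I ^ (1/p) * (x - y) ^ (1/q) := by
    intro x y hyx
    set ν : Measure ℝ := volume.restrict (Ioc y x) with hν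
    have habs : AEMeasurable (fun a => |g a|) (volume : Measure ℝ) := by
      have := hg_Lp.aestronglyMeasurable.norm.aemeasurable
      simpa [Real.norm_eq_abs] using this
    have hmeas : AEMeasurable (fun a => ENNReal.ofReal |g a|) ν :=
      (ENNReal.measurable_ofReal.comp_aemeasurable habs).restrict
    have h1 : θ x - θ y = ∫ s in Ioc y x, g s := by
      rw [hθg y x hyx, intervalIntegral.integral_of_le hyx]
    have h2 : |θ x - θ y| ≤ ∫ s in Ioc y x, |g s| := by
      rw [h1]
      simpa [Real.norm_eq_abs] using
        norm_integral_le_integral_norm (μ := ν) g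
    have h3 : ∫ s in Ioc y x, |g s| = (∫⁻ a, ENNReal.ofReal |g a| ∂ν).toReal := by
      rw [integral_eq_lintegral_of_nonneg_ae (ae_of_all _ fun a => abs_nonneg (g a))
        (hg_Lp.aestronglyMeasurable.restrict.norm.congr
          (ae_of_all _ fun a => (Real.norm_eq_abs (g a)).symm))]
    have holder : ∫⁻ a, ENNReal.ofReal |g a| ∂ν
        ≤ (∫⁻ a, (ENNReal.ofReal |g a|) ^ p ∂ν) ^ (1/p) * (ν Set.univ) ^ (1/q) := by
      have h := ENNReal.lintegral_mul_le_Lp_mul_Lq ν hpq hmeas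
        (aemeasurable_const (b := (1:ℝ≥0∞)))
      simpa using h
    have hν_univ : ν Set.univ = ENNReal.ofReal (x - y) := by
      rw [hν, Measure.restrict_apply_univ, Real.volume_Ioc]
    have hloc : (∫⁻ a, (ENNReal.ofReal |g a|) ^ p ∂ν) ≤ ENNReal.ofReal I := by
      rw [← hglob]
      exact setLIntegral_le_lintegral _ _
    have hbound : ∫⁻ a, ENNReal.ofReal |g a| ∂ν
        ≤ ENNReal.ofReal (I ^ (1/p) * (x - y) ^ (1/q)) := by
      refine holder.trans ?_
      rw [hν_univ, ENNReal.ofReal_mul (Real.rpow_nonneg hI0 _)]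
      gcongr
      · rw [← ENNReal.ofReal_rpow_of_nonneg hI0 (by positivity)]
        exact ENNReal.rpow_le_rpow hloc (by positivity)
      · exact le_of_eq (ENNReal.ofReal_rpow_of_nonneg (show (0:ℝ) ≤ x - y by linarith)
          (by positivity))
    calc |θ x - θ y| ≤ (∫⁻ a, ENNReal.ofReal |g a| ∂ν).toReal := h3 ▸ h2
      _ ≤ (ENNReal.ofReal (I ^ (1/p) * (x - y) ^ (1/q))).toReal :=
          ENNReal.toReal_mono ENNReal.ofReal_ne_top hbound
      _ = I ^ (1/p) * (x - y) ^ (1/q) := ENNReal.toReal_ofReal (mul_nonneg (Real.rpow_nonneg hI0 _)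
            (Real.rpow_nonneg (by linarith) _))
  -- step 3 : squaring
  have sq_step : ∀ x y : ℝ, y ≤ x →
      (θ x - θ y)^2 ≤ I ^ ((2:ℝ)/p) * (x - y) ^ (2 - 2/p) := by
    intro x y hyx
    have h := main x y hyx
    have habs : 0 ≤ I ^ (1/p) * (x - y) ^ (1/q) :=
      mul_nonneg (by positivity) (Real.rpow_nonneg (by linarith) _)
    have hsq : (θ x - θ y)^2 ≤ (I ^ (1/p) * (x - y) ^ (1/q))^2 := by
      rw [← sq_abs (θ x - θ y)]
      exact pow_le_pow_left₀ (abs_nonneg _) h 2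
    refine hsq.trans_eq ?_
    rw [mul_pow, ← Real.rpow_natCast (I ^ (1/p)) 2, ← Real.rpow_natCast ((x-y) ^ (1/q)) 2,
      ← Real.rpow_mul hI0, ← Real.rpow_mul (by linarith : (0:ℝ) ≤ x - y)]
    push_cast
    congr 2
    · ring
    · rw [hq, Real.conjExponent]
      field_simp
  intro x y
  rcases le_total y x with h | h
  · have := sq_step x y h
    rwa [abs_of_nonneg (by linarith : (0:ℝ) ≤ x - y)]
  · have := sq_step y x h
    rw [show (θ y - θ x) = -(θ x - θ y) by ring, neg_sq] at this
    rwa [abs_sub_comm, abs_of_nonneg (by linarith : (0:ℝ) ≤ y - x)]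


lemma aux_theta_cont (p : ℝ) (hp : 2 < p) (θ g : ℝ → ℝ)
    (hg_Lp : MemLp g (ENNReal.ofReal p) (volume : Measure ℝ))
    (hθg : ∀ a b : ℝ, a ≤ b → θ b - θ a = ∫ s in a..b, g s) :
    Continuous θ := by
  have hInt : ∀ a b : ℝ, IntervalIntegrable g volume a b := by
    intro a b
    rw [intervalIntegrable_iff]
    haveI : IsFiniteMeasure (volume.restrict (Set.uIoc a b)) :=
      ⟨by rw [Measure.restrict_apply_univ, Set.uIoc]; exact measure_Ioc_lt_top⟩
    exact memLp_one_iff_integrable.mp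
      ((hg_Lp.restrict _).mono_exponent
        (ENNReal.one_le_ofReal.mpr (by linarith)))
  have hθ_eq : ∀ x, θ x = θ 0 + ∫ s in (0:ℝ)..x, g s := by
    intro x
    rcases le_total 0 x with h | h
    · have := hθg 0 x h; linarith
    · have := hθg x 0 h
      rw [intervalIntegral.integral_symm]
      linarith
  have : Continuous fun x => θ 0 + ∫ s in (0:ℝ)..x, g s :=
    continuous_const.add (intervalIntegral.continuous_primitive hInt 0)
  exact (funext hθ_eq) ▸ this

section
variable (p M : ℝ) (θ g : ℝ → ℝ)

lemma aux_inner (hp : 2 < p) (hM : 0 ≤ M)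
    (hθ_bdd : ∀ x, |θ x| ≤ M)
    (hg_Lp : MemLp g (ENNReal.ofReal p) (volume : Measure ℝ))
    (hθg : ∀ a b : ℝ, a ≤ b → θ b - θ a = ∫ s in a..b, g s)
    (hcont : Continuous θ)
    (hhold : ∀ x y : ℝ, (θ x - θ y)^2
      ≤ ((∫ x : ℝ, |g x| ^ p) ^ ((2:ℝ)/p)) * |x - y| ^ (2 - 2/p))
    (y : ℝ) :
    ∫⁻ x : ℝ, ENNReal.ofReal (((θ x - θ y)/(x - y))^2)
      ≤ ENNReal.ofReal ((2*p/(p-2)) * ((∫ x : ℝ, |g x| ^ p) ^ ((2:ℝ)/p)) + 8*M^2) := by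
  have hp0 : (0:ℝ) < p := by linarith
  set G : ℝ := (∫ x : ℝ, |g x| ^ p) ^ ((2:ℝ)/p) with hG
  have hG0 : 0 ≤ G :=
    Real.rpow_nonneg (integral_nonneg fun x => Real.rpow_nonneg (abs_nonneg _) _) _
  -- measurability of the integrand
  have hFmeas : Measurable fun x : ℝ => ENNReal.ofReal (((θ x - θ y)/(x - y))^2) :=
    ENNReal.measurable_ofReal.comp
      ((((hcont.measurable.sub measurable_const)).div
        (measurable_id.sub measurable_const)).pow_const 2)
  -- change of variables x = t + y
  have hcov : ∫⁻ x : ℝ, ENNReal.ofReal (((θ x - θ y)/(x - y))^2)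
      = ∫⁻ t : ℝ, ENNReal.ofReal (((θ (t + y) - θ y)/t)^2) := by
    rw [← (measurePreserving_add_right (volume : Measure ℝ) y).lintegral_comp hFmeas]
    congr 1
    ext t
    rw [add_sub_cancel_right]
  rw [hcov]
  set S : Set ℝ := {t : ℝ | |t| ≤ 1} with hSdef
  have hS : MeasurableSet S := measurableSet_le continuous_abs.measurable measurable_const
  rw [← lintegral_add_compl (fun t => ENNReal.ofReal (((θ (t + y) - θ y)/t)^2)) hS]
  have habs2 : ∀ t : ℝ, t ≠ 0 → (((θ (t + y) - θ y)/t)^2) = (θ (t + y) - θ y)^2 / |t| ^ (2:ℝ) := by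
    intro t ht
    rw [div_pow, ← sq_abs t, ← Real.rpow_natCast |t| 2]
    norm_num
  have hnear : ∫⁻ t in S, ENNReal.ofReal (((θ (t + y) - θ y)/t)^2)
      ≤ ENNReal.ofReal ((2*p/(p-2)) * G) := by
    have hmono : ∀ t ∈ S, ENNReal.ofReal (((θ (t + y) - θ y)/t)^2)
        ≤ ENNReal.ofReal (G * |t| ^ (-(2/p))) := by
      intro t htS
      apply ENNReal.ofReal_le_ofReal
      rcases eq_or_ne t 0 with rfl | ht
      · simp only [div_zero, ne_eq, OfNat.ofNat_ne_zero, not_false_eq_true, zero_pow]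
        positivity
      · have htpos : 0 < |t| := abs_pos.mpr ht
        rw [habs2 t ht]
        have h1 : (θ (t + y) - θ y)^2 ≤ G * |t| ^ (2 - 2/p) := by
          have := hhold (t + y) y
          rwa [add_sub_cancel_right] at this
        calc (θ (t + y) - θ y)^2 / |t| ^ (2:ℝ)
            ≤ (G * |t| ^ (2 - 2/p)) / |t| ^ (2:ℝ) := by
              exact div_le_div_of_nonneg_right h1 (by positivity)
          _ = G * |t| ^ (-(2/p)) := by
              rw [mul_div_assoc, ← Real.rpow_sub htpos]
              congr 1
              ring_nf
    calc ∫⁻ t in S, ENNReal.ofReal (((θ (t + y) - θ y)/t)^2)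
        ≤ ∫⁻ t in S, ENNReal.ofReal (G * |t| ^ (-(2/p))) :=
          setLIntegral_mono (ENNReal.measurable_ofReal.comp
            ((measurable_const.mul (continuous_abs.measurable.pow measurable_const)))) hmono
      _ = ENNReal.ofReal G * ∫⁻ t in S, ENNReal.ofReal (|t| ^ (-(2/p))) := by
          rw [← lintegral_const_mul' _ _ ENNReal.ofReal_ne_top]
          congr 1
          ext t
          rw [← ENNReal.ofReal_mul hG0]
      _ ≤ ENNReal.ofReal G * ENNReal.ofReal (2/(1-2/p)) := by
          gcongr
          exact aux_near (2/p) (by positivity) (by rw [div_lt_one hp0]; linarith)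
      _ = ENNReal.ofReal ((2*p/(p-2)) * G) := by
          rw [← ENNReal.ofReal_mul hG0]
          congr 1
          have h2 : 2/(1-2/p) = 2*p/(p-2) := by
            rw [show (1 - 2/p) = (p-2)/p by field_simp, div_div_eq_mul_div]
          rw [h2, mul_comm]
  have hfar : ∫⁻ t in Sᶜ, ENNReal.ofReal (((θ (t + y) - θ y)/t)^2)
      ≤ ENNReal.ofReal (8*M^2) := by
    have hmono : ∀ t ∈ Sᶜ, ENNReal.ofReal (((θ (t + y) - θ y)/t)^2)
        ≤ ENNReal.ofReal (4*M^2 * |t| ^ (-2:ℝ)) := by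
      intro t htS
      have ht1 : 1 < |t| := by simpa [hSdef] using htS
      have ht : t ≠ 0 := by intro h; rw [h] at ht1; simp at ht1; linarith
      have htpos : (0:ℝ) < |t| := lt_trans one_pos ht1
      apply ENNReal.ofReal_le_ofReal
      rw [habs2 t ht]
      have hd : (θ (t + y) - θ y)^2 ≤ 4*M^2 := by
        have h1 : |θ (t + y) - θ y| ≤ 2*M := by
          calc |θ (t + y) - θ y| ≤ |θ (t + y)| + |θ y| := abs_sub _ _
            _ ≤ 2*M := by have := hθ_bdd (t+y); have := hθ_bdd y; linarith
        calc (θ (t + y) - θ y)^2 = |θ (t + y) - θ y|^2 := (sq_abs _).symm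
          _ ≤ (2*M)^2 := pow_le_pow_left₀ (abs_nonneg _) h1 2
          _ = 4*M^2 := by ring
      calc (θ (t + y) - θ y)^2 / |t| ^ (2:ℝ)
          ≤ (4*M^2) / |t| ^ (2:ℝ) := by
            exact div_le_div_of_nonneg_right hd (by positivity)
        _ = 4*M^2 * |t| ^ (-2:ℝ) := by
            rw [Real.rpow_neg htpos.le, div_eq_mul_inv]
    calc ∫⁻ t in Sᶜ, ENNReal.ofReal (((θ (t + y) - θ y)/t)^2)
        ≤ ∫⁻ t in Sᶜ, ENNReal.ofReal (4*M^2 * |t| ^ (-2:ℝ)) :=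
          setLIntegral_mono (ENNReal.measurable_ofReal.comp
            ((measurable_const.mul (continuous_abs.measurable.pow measurable_const)))) hmono
      _ = ENNReal.ofReal (4*M^2) * ∫⁻ t in Sᶜ, ENNReal.ofReal (|t| ^ (-2:ℝ)) := by
          rw [← lintegral_const_mul' _ _ ENNReal.ofReal_ne_top]
          congr 1
          ext t
          rw [← ENNReal.ofReal_mul (by positivity)]
      _ ≤ ENNReal.ofReal (4*M^2) * 2 := by
          gcongr
          have hSc : Sᶜ = {t : ℝ | 1 < |t|} := by
            ext t; simp [hSdef, not_le]
          rw [hSc]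
          exact aux_far
      _ = ENNReal.ofReal (8*M^2) := by
          rw [show (2:ℝ≥0∞) = ENNReal.ofReal 2 by norm_num,
            ← ENNReal.ofReal_mul (by positivity)]
          congr 1
          ring
  calc _ ≤ ENNReal.ofReal ((2*p/(p-2)) * G) + ENNReal.ofReal (8*M^2) := add_le_add hnear hfar
    _ = _ := by
        rw [← ENNReal.ofReal_add (mul_nonneg (div_nonneg (by linarith) (by linarith)) hG0)
          (by positivity)]
end


lemma aux_main (p M : ℝ) (hp : 2 < p) (hM : 0 ≤ M)
    (θ g u : ℝ → ℝ)
    (hθ_bdd : ∀ x, |θ x| ≤ M)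
    (hg_Lp : MemLp g (ENNReal.ofReal p) (volume : Measure ℝ))
    (hθg : ∀ a b : ℝ, a ≤ b → θ b - θ a = ∫ s in a..b, g s)
    (hu : Measurable u) :
    H12normSq (fun x => θ x * u x)
      ≤ ENNReal.ofReal
          (19 * M ^ 2 + (4 * p / (p - 2)) * ((∫ x : ℝ, |g x| ^ p) ^ ((2:ℝ) / p)))
        * H12normSq u := by
  have hcont := aux_theta_cont p hp θ g hg_Lp hθg
  have hhold := aux_holder p hp θ g hg_Lp hθg
  have hp2 : (0:ℝ) < p - 2 := by linarith
  set G : ℝ := (∫ x : ℝ, |g x| ^ p) ^ ((2:ℝ)/p) with hGdef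
  have hG0 : 0 ≤ G :=
    Real.rpow_nonneg (integral_nonneg fun x => Real.rpow_nonneg (abs_nonneg _) _) _
  set C0 : ℝ := (2*p/(p-2)) * G + 8*M^2 with hC0def
  have hC00 : 0 ≤ C0 :=
    add_nonneg (mul_nonneg (div_nonneg (by linarith) hp2.le) hG0) (by positivity)
  set c : ℝ := 19 * M ^ 2 + (4 * p / (p - 2)) * G with hcdef
  set A : ℝ≥0∞ := ∫⁻ x : ℝ, ENNReal.ofReal (u x ^ 2) with hA
  set B : ℝ≥0∞ := ∫⁻ q : ℝ × ℝ, ENNReal.ofReal (((u q.1 - u q.2) / (q.1 - q.2)) ^ 2) with hB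
  -- L² part
  have part1 : (∫⁻ x : ℝ, ENNReal.ofReal ((θ x * u x) ^ 2)) ≤ ENNReal.ofReal (M^2) * A := by
    calc (∫⁻ x : ℝ, ENNReal.ofReal ((θ x * u x) ^ 2))
        ≤ ∫⁻ x : ℝ, ENNReal.ofReal (M^2) * ENNReal.ofReal (u x ^ 2) := by
          apply lintegral_mono
          intro x
          show ENNReal.ofReal ((θ x * u x) ^ 2)
            ≤ ENNReal.ofReal (M^2) * ENNReal.ofReal (u x ^ 2)
          rw [← ENNReal.ofReal_mul (by positivity)]
          apply ENNReal.ofReal_le_ofReal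
          rw [mul_pow]
          apply mul_le_mul_of_nonneg_right _ (sq_nonneg _)
          calc θ x ^ 2 = |θ x| ^ 2 := (sq_abs _).symm
            _ ≤ M ^ 2 := pow_le_pow_left₀ (abs_nonneg _) (hθ_bdd x) 2
      _ = ENNReal.ofReal (M^2) * A := lintegral_const_mul' _ _ ENNReal.ofReal_ne_top
  -- measurability
  have hKmeas : Measurable fun q : ℝ × ℝ =>
      ENNReal.ofReal (((θ q.1 - θ q.2)/(q.1 - q.2))^2) :=
    ENNReal.measurable_ofReal.comp
      ((((hcont.measurable.comp measurable_fst).sub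
        (hcont.measurable.comp measurable_snd)).div
        (measurable_fst.sub measurable_snd)).pow_const 2)
  have hu2meas : Measurable fun q : ℝ × ℝ => ENNReal.ofReal ((u q.2)^2) :=
    ENNReal.measurable_ofReal.comp ((hu.comp measurable_snd).pow_const 2)
  have hGumeas : Measurable fun q : ℝ × ℝ =>
      ENNReal.ofReal (((u q.1 - u q.2)/(q.1 - q.2))^2) :=
    ENNReal.measurable_ofReal.comp
      ((((hu.comp measurable_fst).sub (hu.comp measurable_snd)).div
        (measurable_fst.sub measurable_snd)).pow_const 2)
  -- cross term via Tonelli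
  have hT : (∫⁻ q : ℝ × ℝ, ENNReal.ofReal ((u q.2)^2)
        * ENNReal.ofReal (((θ q.1 - θ q.2)/(q.1 - q.2))^2))
      ≤ ENNReal.ofReal C0 * A := by
    rw [Measure.volume_eq_prod]
    rw [lintegral_prod_symm _ (show AEMeasurable (fun q : ℝ × ℝ => ENNReal.ofReal ((u q.2)^2)
      * ENNReal.ofReal (((θ q.1 - θ q.2)/(q.1 - q.2))^2)) ((volume : Measure ℝ).prod volume) from
      (hu2meas.mul hKmeas).aemeasurable)]
    have inner : ∀ y : ℝ,
        (∫⁻ x : ℝ, ENNReal.ofReal ((u y)^2) * ENNReal.ofReal (((θ x - θ y)/(x - y))^2))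
        ≤ ENNReal.ofReal ((u y)^2) * ENNReal.ofReal C0 := by
      intro y
      rw [lintegral_const_mul' _ _ ENNReal.ofReal_ne_top]
      exact mul_le_mul_right (aux_inner p M θ g hp hM hθ_bdd hg_Lp hθg hcont hhold y) _
    calc _ ≤ ∫⁻ y : ℝ, ENNReal.ofReal ((u y)^2) * ENNReal.ofReal C0 := lintegral_mono inner
      _ = A * ENNReal.ofReal C0 := lintegral_mul_const' _ _ ENNReal.ofReal_ne_top
      _ = ENNReal.ofReal C0 * A := mul_comm _ _
  -- Gagliardo part
  have part2 : (∫⁻ q : ℝ × ℝ,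
        ENNReal.ofReal (((θ q.1 * u q.1 - θ q.2 * u q.2) / (q.1 - q.2)) ^ 2))
      ≤ ENNReal.ofReal (2*M^2) * B + 2 * (ENNReal.ofReal C0 * A) := by
    have point : ∀ q : ℝ × ℝ,
        ENNReal.ofReal (((θ q.1 * u q.1 - θ q.2 * u q.2) / (q.1 - q.2)) ^ 2)
        ≤ ENNReal.ofReal (2*M^2) * ENNReal.ofReal (((u q.1 - u q.2)/(q.1 - q.2))^2)
          + 2 * (ENNReal.ofReal ((u q.2)^2)
              * ENNReal.ofReal (((θ q.1 - θ q.2)/(q.1 - q.2))^2)) := by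
      intro q
      have h1 := aux_sq_split (θ q.1) (u q.1) (θ q.2) (u q.2) (q.1 - q.2)
      have hθsq : (θ q.1)^2 ≤ M^2 := by
        rw [← sq_abs]; exact pow_le_pow_left₀ (abs_nonneg _) (hθ_bdd _) 2
      have h2 : ((θ q.1 * u q.1 - θ q.2 * u q.2) / (q.1 - q.2)) ^ 2
          ≤ 2*M^2*(((u q.1 - u q.2)/(q.1 - q.2))^2)
            + 2*((u q.2)^2*(((θ q.1 - θ q.2)/(q.1 - q.2))^2)) := by
        nlinarith [sq_nonneg ((u q.1 - u q.2)/(q.1 - q.2)),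
          sq_nonneg ((θ q.1 - θ q.2)/(q.1 - q.2)), sq_nonneg (u q.2)]
      calc ENNReal.ofReal (((θ q.1 * u q.1 - θ q.2 * u q.2) / (q.1 - q.2)) ^ 2)
          ≤ ENNReal.ofReal (2*M^2*(((u q.1 - u q.2)/(q.1 - q.2))^2)
              + 2*((u q.2)^2*(((θ q.1 - θ q.2)/(q.1 - q.2))^2))) :=
            ENNReal.ofReal_le_ofReal h2
        _ = _ := by
            rw [ENNReal.ofReal_add (by positivity) (by positivity),
              ENNReal.ofReal_mul (by positivity),
              ENNReal.ofReal_mul (by norm_num : (0:ℝ) ≤ 2),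
              ENNReal.ofReal_mul (by positivity)]
            norm_num
            rw [ENNReal.ofReal_mul (sq_nonneg (u q.2))]
    calc (∫⁻ q : ℝ × ℝ,
          ENNReal.ofReal (((θ q.1 * u q.1 - θ q.2 * u q.2) / (q.1 - q.2)) ^ 2))
        ≤ ∫⁻ q : ℝ × ℝ, (ENNReal.ofReal (2*M^2)
            * ENNReal.ofReal (((u q.1 - u q.2)/(q.1 - q.2))^2)
          + 2 * (ENNReal.ofReal ((u q.2)^2)
              * ENNReal.ofReal (((θ q.1 - θ q.2)/(q.1 - q.2))^2))) := lintegral_mono point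
      _ = (∫⁻ q : ℝ × ℝ, ENNReal.ofReal (2*M^2)
            * ENNReal.ofReal (((u q.1 - u q.2)/(q.1 - q.2))^2))
          + ∫⁻ q : ℝ × ℝ, 2 * (ENNReal.ofReal ((u q.2)^2)
              * ENNReal.ofReal (((θ q.1 - θ q.2)/(q.1 - q.2))^2)) :=
          lintegral_add_left (measurable_const.mul hGumeas) _
      _ = ENNReal.ofReal (2*M^2) * B
          + 2 * (∫⁻ q : ℝ × ℝ, ENNReal.ofReal ((u q.2)^2)
              * ENNReal.ofReal (((θ q.1 - θ q.2)/(q.1 - q.2))^2)) := by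
          rw [lintegral_const_mul' _ _ ENNReal.ofReal_ne_top,
            lintegral_const_mul' _ _ (by norm_num : (2:ℝ≥0∞) ≠ ⊤)]
      _ ≤ ENNReal.ofReal (2*M^2) * B + 2 * (ENNReal.ofReal C0 * A) := by
          gcongr
  -- combine
  have hsplit : H12normSq (fun x => θ x * u x)
      = (∫⁻ x : ℝ, ENNReal.ofReal ((θ x * u x) ^ 2))
        + ∫⁻ q : ℝ × ℝ,
            ENNReal.ofReal (((θ q.1 * u q.1 - θ q.2 * u q.2) / (q.1 - q.2)) ^ 2) := rfl
  have hU : H12normSq u = A + B := rfl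
  have hcoef1 : ENNReal.ofReal (M^2) + 2 * ENNReal.ofReal C0 ≤ ENNReal.ofReal c := by
    rw [show (2:ℝ≥0∞) = ENNReal.ofReal 2 by norm_num,
      ← ENNReal.ofReal_mul (by norm_num : (0:ℝ) ≤ 2),
      ← ENNReal.ofReal_add (by positivity) (by linarith)]
    apply ENNReal.ofReal_le_ofReal
    rw [hC0def, hcdef]
    ring_nf
    nlinarith [sq_nonneg M]
  have hcoef2 : ENNReal.ofReal (2*M^2) ≤ ENNReal.ofReal c := by
    apply ENNReal.ofReal_le_ofReal
    rw [hcdef]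
    nlinarith [mul_nonneg (div_nonneg (by linarith : (0:ℝ) ≤ 4*p) hp2.le) hG0]
  calc H12normSq (fun x => θ x * u x)
      ≤ (ENNReal.ofReal (M^2) * A)
        + (ENNReal.ofReal (2*M^2) * B + 2 * (ENNReal.ofReal C0 * A)) := by
        rw [hsplit]; exact add_le_add part1 part2
    _ = (ENNReal.ofReal (M^2) + 2 * ENNReal.ofReal C0) * A + ENNReal.ofReal (2*M^2) * B := by
        ring
    _ ≤ ENNReal.ofReal c * A + ENNReal.ofReal c * B :=
        add_le_add (mul_le_mul_left hcoef1 A) (mul_le_mul_left hcoef2 B)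
    _ = ENNReal.ofReal c * (A + B) := (mul_add _ _ _).symm
    _ = ENNReal.ofReal c * H12normSq u := by rw [hU]


/-- Bounded functions `θ` with `θ' ∈ Lᵖ(ℝ)`, `p > 2`, are
multipliers of `H^{1/2}(ℝ)`:
`N(θu)² ≤ (19M² + (4p/(p-2))‖g‖²_{Lᵖ})·N(u)²`, where `|θ| ≤ M` and `θ' = g`. -/
theorem stmt11 (p M : ℝ) (hp : 2 < p) (hM : 0 ≤ M)
    (θ g : ℝ → ℝ)
    (hθ_bdd : ∀ x, |θ x| ≤ M)
    (hg_Lp : MemLp g (ENNReal.ofReal p) (volume : Measure ℝ))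
    (hθg : ∀ a b : ℝ, a ≤ b → θ b - θ a = ∫ s in a..b, g s)
    (u : ℝ → ℝ) (hu_L2 : MemLp u 2 (volume : Measure ℝ))
    (hu_fin : H12normSq u < ⊤) :
    H12normSq (fun x => θ x * u x)
      ≤ ENNReal.ofReal
          (19 * M ^ 2 + (4 * p / (p - 2)) * ((∫ x : ℝ, |g x| ^ p) ^ ((2:ℝ) / p)))
        * H12normSq u ∧
    H12normSq (fun x => θ x * u x) < ⊤ := by
  set u' : ℝ → ℝ := hu_L2.1.mk u with hu'def
  have hu'meas : Measurable u' := hu_L2.1.stronglyMeasurable_mk.measurable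
  have huu' : u =ᵐ[(volume : Measure ℝ)] u' := hu_L2.1.ae_eq_mk
  have h1 : H12normSq u = H12normSq u' := H12normSq_congr huu'
  have h2 : H12normSq (fun x => θ x * u x) = H12normSq (fun x => θ x * u' x) :=
    H12normSq_congr (huu'.mono fun x hx => by simp only [hx])
  have key := aux_main p M hp hM θ g u' hθ_bdd hg_Lp hθg hu'meas
  constructor
  · rw [h1, h2]; exact key
  · rw [h2]
    refine lt_of_le_of_lt key ?_
    rw [← h1]
    exact ENNReal.mul_lt_top ENNReal.ofReal_lt_top hu_fin
end
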